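/- arXiv:2312.04932 — 6 statements merged into one kernel-verified Lean document; each statement's English description precedes it below -/
import Mathlib

section
/- Let μ be a Borel probability measure on ℝ with right-continuous distribution function M, let {x_j} be the (at most countable) set of atoms of μ with masses m_j = μ({x_j}), and write μ = Σ_j m_j δ_{x_j} + ρ where ρ is the diffuse (atomless) part. If ρ is nonzero, then the pushforward of ρ under M equals the restriction of Lebesgue measure on (0,1) to the complement of J, where J is the union over j of the open intervals (M(x_j−), M(x_j)). -/
open MeasureTheory Set
open scoped ENNReal

open Filter Topology ProbabilityTheory in
private lemma aux_measure_Iio (μ : Measure ℝ) [IsProbabilityMeasure μ] (x : ℝ) :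
    μ (Iio x) = ENNReal.ofReal (Function.leftLim (cdf μ) x) := by
  have hL0 : 0 ≤ Function.leftLim (cdf μ) x :=
    (cdf_nonneg μ (x - 1)).trans ((monotone_cdf μ).le_leftLim (sub_one_lt x))
  have hLle : Function.leftLim (cdf μ) x ≤ cdf μ x := (monotone_cdf μ).leftLim_le le_rfl
  have hsing : μ {x} = ENNReal.ofReal (cdf μ x - Function.leftLim (cdf μ) x) := by
    have := (cdf μ).measure_singleton x
    rwa [measure_cdf] at this
  have hunion : μ (Iio x) + μ {x} = μ (Iic x) := by
    rw [← measure_union (by simp) (measurableSet_singleton x), Iio_union_right]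
  have hofReal : ENNReal.ofReal (Function.leftLim (cdf μ) x) + μ {x} = μ (Iic x) := by
    rw [hsing, ← ENNReal.ofReal_add hL0 (sub_nonneg.2 hLle), ← ofReal_cdf μ x]
    ring_nf
  have := hunion.trans hofReal.symm
  exact WithTop.add_right_cancel (measure_ne_top μ {x}) this

open Filter Topology ProbabilityTheory in
private lemma aux_key (μ : Measure ℝ) [IsProbabilityMeasure μ] (c : ℝ) :
    μ {x | cdf μ x ≤ c} +
      ∑' x : {x : ℝ | μ {x} ≠ 0},
        (if cdf μ (x : ℝ) ≤ c then 0 else ENNReal.ofReal (c - Function.leftLim (cdf μ) (x : ℝ)))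
      = ENNReal.ofReal (min c 1) := by
  have hmono : Monotone (cdf μ) := monotone_cdf μ
  have hL0 : ∀ y : ℝ, 0 ≤ Function.leftLim (cdf μ) y := fun y =>
    (cdf_nonneg μ (y - 1)).trans (hmono.le_leftLim (sub_one_lt y))
  have hsing : ∀ y : ℝ, μ {y} = ENNReal.ofReal (cdf μ y - Function.leftLim (cdf μ) y) := fun y => by
    have := (cdf μ).measure_singleton y
    rwa [measure_cdf] at this
  by_cases hne : ∃ x, c < cdf μ x
  · by_cases hbd : BddBelow {x | c < cdf μ x}
    · set a := sInf {x | c < cdf μ x} with ha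
      have hUne : {x | c < cdf μ x}.Nonempty := hne
      have hgt : ∀ x, a < x → c < cdf μ x := by
        intro x hx
        obtain ⟨u, hu, hux⟩ : ∃ u ∈ {x | c < cdf μ x}, u < x := by
          by_contra h
          push_neg at h
          exact absurd (le_csInf hUne fun u hu => h u hu) (not_le.2 hx)
        exact lt_of_lt_of_le hu (hmono hux.le)
      have hle : ∀ x, x < a → cdf μ x ≤ c := fun x hx =>
        le_of_not_gt fun h => absurd (csInf_le hbd (h : x ∈ {x | c < cdf μ x})) (not_le.2 hx)
      have hca : c ≤ cdf μ a := by
        have ht : Tendsto (cdf μ) (𝓝[>] a) (𝓝 (cdf μ a)) :=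
          ((cdf μ).right_continuous a).tendsto.mono_left (nhdsWithin_mono a Ioi_subset_Ici_self)
        exact ge_of_tendsto ht (eventually_nhdsWithin_of_forall fun x hx => (hgt x hx).le)
      have hLa : Function.leftLim (cdf μ) a ≤ c :=
        le_of_tendsto (hmono.tendsto_leftLim a)
          (eventually_nhdsWithin_of_forall fun x hx => hle x hx)
      have hc1 : c ≤ 1 := hca.trans (cdf_le_one μ a)
      have hmin : min c 1 = c := min_eq_left hc1
      by_cases hFa : cdf μ a ≤ c
      · have hSc : {x | cdf μ x ≤ c} = Iic a := by
          ext x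
          simp only [mem_setOf_eq, mem_Iic]
          constructor
          · intro h
            by_contra hx
            exact absurd h (not_le.2 (hgt x (not_le.1 hx)))
          · intro h
            exact le_trans (hmono h) hFa
        have hμS : μ {x | cdf μ x ≤ c} = ENNReal.ofReal c := by
          rw [hSc, ← ofReal_cdf μ a, le_antisymm hFa hca]
        have hsum : (∑' x : {x : ℝ | μ {x} ≠ 0},
            (if cdf μ (x : ℝ) ≤ c then 0
             else ENNReal.ofReal (c - Function.leftLim (cdf μ) (x : ℝ)))) = 0 := by
          rw [ENNReal.tsum_eq_zero]
          rintro ⟨x, hx⟩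
          by_cases hxc : cdf μ x ≤ c
          · simp [hxc]
          · have hax : a < x := by
              rcases lt_trichotomy x a with h | h | h
              · exact absurd (hle x h) hxc
              · exact absurd (h ▸ hFa) hxc
              · exact h
            have hcl : c ≤ Function.leftLim (cdf μ) x := hca.trans (hmono.le_leftLim hax)
            simp [hxc, ENNReal.ofReal_eq_zero.2 (sub_nonpos.2 hcl)]
        rw [hμS, hsum, add_zero, hmin]
      · push_neg at hFa
        have hSc : {x | cdf μ x ≤ c} = Iio a := by
          ext x
          simp only [mem_setOf_eq, mem_Iio]
          constructor
          · intro h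
            by_contra hx
            push_neg at hx
            rcases eq_or_lt_of_le hx with h' | h'
            · exact absurd (h' ▸ h) (not_le.2 hFa)
            · exact absurd h (not_le.2 (hgt x h'))
          · exact hle x
        have hμS : μ {x | cdf μ x ≤ c} = ENNReal.ofReal (Function.leftLim (cdf μ) a) := by
          rw [hSc, aux_measure_Iio]
        have hsum : (∑' x : {x : ℝ | μ {x} ≠ 0},
            (if cdf μ (x : ℝ) ≤ c then 0
             else ENNReal.ofReal (c - Function.leftLim (cdf μ) (x : ℝ))))
            = ENNReal.ofReal (c - Function.leftLim (cdf μ) a) := by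
          rcases eq_or_lt_of_le hLa with hEq | hLt
          · have hall : ∀ x : {x : ℝ | μ {x} ≠ 0},
                (if cdf μ (x : ℝ) ≤ c then 0
                 else ENNReal.ofReal (c - Function.leftLim (cdf μ) (x : ℝ))) = 0 := by
              rintro ⟨x, hx⟩
              by_cases hxc : cdf μ x ≤ c
              · simp [hxc]
              · have hax : a ≤ x := le_of_not_gt fun h => hxc (hle x h)
                have hcl : c ≤ Function.leftLim (cdf μ) x := by
                  rcases eq_or_lt_of_le hax with h | h
                  · rw [← h, ← hEq]
                  · exact hFa.le.trans (hmono.le_leftLim h)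
                simp [hxc, ENNReal.ofReal_eq_zero.2 (sub_nonpos.2 hcl)]
            rw [tsum_congr hall, tsum_zero, eq_comm, ENNReal.ofReal_eq_zero, ← hEq, sub_self]
          · have haA : μ {a} ≠ 0 := by
              rw [hsing a]
              simp only [ne_eq, ENNReal.ofReal_eq_zero, not_le]
              exact sub_pos.2 (hLt.trans hFa)
            rw [tsum_eq_single (⟨a, haA⟩ : {x : ℝ | μ {x} ≠ 0}) ?_]
            · simp [not_le.2 hFa]
            · rintro ⟨x, hx⟩ hne'
              have hxa : x ≠ a := fun h => hne' (Subtype.ext h)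
              by_cases hxc : cdf μ x ≤ c
              · simp [hxc]
              · have hax : a < x :=
                  lt_of_le_of_ne (le_of_not_gt fun h => hxc (hle x h)) (Ne.symm hxa)
                simp [hxc,
                  ENNReal.ofReal_eq_zero.2 (sub_nonpos.2 (hFa.le.trans (hmono.le_leftLim hax)))]
        rw [hμS, hsum, ← ENNReal.ofReal_add (hL0 a) (sub_nonneg.2 hLa), hmin]
        ring_nf
    · have hall : ∀ x, c < cdf μ x := by
        intro x
        obtain ⟨u, hu, hux⟩ : ∃ u ∈ {x | c < cdf μ x}, u < x := by
          by_contra h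
          push_neg at h
          exact hbd ⟨x, fun u hu => h u hu⟩
        exact lt_of_lt_of_le hu (hmono hux.le)
      have hc0 : c ≤ 0 :=
        ge_of_tendsto (tendsto_cdf_atBot μ) (Eventually.of_forall fun x => (hall x).le)
      have hS : {x | cdf μ x ≤ c} = ∅ := by
        ext x
        simp [not_le.2 (hall x)]
      have hsum : (∑' x : {x : ℝ | μ {x} ≠ 0},
          (if cdf μ (x : ℝ) ≤ c then 0
           else ENNReal.ofReal (c - Function.leftLim (cdf μ) (x : ℝ)))) = 0 := by
        rw [ENNReal.tsum_eq_zero]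
        rintro ⟨x, hx⟩
        by_cases hxc : cdf μ x ≤ c
        · simp [hxc]
        · simp [hxc, ENNReal.ofReal_eq_zero.2 (sub_nonpos.2 (hc0.trans (hL0 x)))]
      rw [hS, measure_empty, hsum, add_zero, eq_comm, ENNReal.ofReal_eq_zero]
      exact le_trans (min_le_left c 1) hc0
  · push_neg at hne
    have h1c : 1 ≤ c := le_of_tendsto (tendsto_cdf_atTop μ) (Eventually.of_forall fun x => hne x)
    have hS : {x | cdf μ x ≤ c} = univ := eq_univ_of_forall hne
    have hsum : (∑' x : {x : ℝ | μ {x} ≠ 0},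
        (if cdf μ (x : ℝ) ≤ c then 0
         else ENNReal.ofReal (c - Function.leftLim (cdf μ) (x : ℝ)))) = 0 := by
      rw [ENNReal.tsum_eq_zero]
      rintro ⟨x, hx⟩
      simp [hne x]
    rw [hS, measure_univ, hsum, add_zero, min_eq_right h1c, ENNReal.ofReal_one]

private lemma aux_volIoo (a b c : ℝ) :
    volume (Ioo a b ∩ Iic c) = ENNReal.ofReal (min b c - a) := by
  rcases le_or_gt b c with h | h
  · have hsub : Ioo a b ⊆ Iic c := fun z hz => hz.2.le.trans h
    rw [inter_eq_self_of_subset_left hsub, Real.volume_Ioo, min_eq_left h]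
  · have heq : Ioo a b ∩ Iic c = Ioc a c := by
      ext z
      constructor
      · rintro ⟨⟨h1, _⟩, h3⟩
        exact ⟨h1, h3⟩
      · rintro ⟨h1, h3⟩
        exact ⟨⟨h1, lt_of_le_of_lt h3 h⟩, h3⟩
    rw [heq, Real.volume_Ioc, min_eq_right h.le]

/-- Decomposition lemma: if `μ` is a Borel probability measure with right-continuous CDF `M`,
and `ρ` is its diffuse (atomless) part, then, provided `ρ ≠ 0`, the pushforward `M_# ρ` equals
Lebesgue measure on `(0,1)` restricted to the complement of the jump set
`J = ⋃_{atoms x} (M(x-), M(x))`. -/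
theorem stmt_1 (μ : Measure ℝ) [IsProbabilityMeasure μ]
    (M Mleft : ℝ → ℝ)
    (hM : ∀ x, M x = (μ (Iic x)).toReal)
    (hMleft : ∀ x, Mleft x = (μ (Iio x)).toReal)
    (ρ : Measure ℝ)
    (hρ : ρ = μ.restrict {x : ℝ | μ {x} = 0})
    (hρ0 : ρ ≠ 0)
    (J : Set ℝ)
    (hJ : J = ⋃ x ∈ {x : ℝ | μ {x} ≠ 0}, Ioo (Mleft x) (M x)) :
    Measure.map M ρ = volume.restrict (Ioo (0:ℝ) 1 \ J) := by
  classical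
  open ProbabilityTheory in
  have hFM : ∀ x, M x = cdf μ x := fun x => by rw [hM x, ProbabilityTheory.cdf_eq_real, measureReal_def]
  have hL0 : ∀ y : ℝ, 0 ≤ Function.leftLim (ProbabilityTheory.cdf μ) y := fun y =>
    (ProbabilityTheory.cdf_nonneg μ (y - 1)).trans
      ((ProbabilityTheory.monotone_cdf μ).le_leftLim (sub_one_lt y))
  have hLM : ∀ x, Mleft x = Function.leftLim (ProbabilityTheory.cdf μ) x := fun x => by
    rw [hMleft x, aux_measure_Iio μ x, ENNReal.toReal_ofReal (hL0 x)]
  have hMmono : Monotone M := fun x y h => by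
    rw [hFM, hFM]
    exact ProbabilityTheory.monotone_cdf μ h
  have hMmeas : Measurable M := hMmono.measurable
  set A := {x : ℝ | μ {x} ≠ 0} with hAdef
  have hAcnt : A.Countable := by
    have h1 : {x : ℝ | 0 < μ {x}}.Countable := by
      apply Measure.countable_meas_pos_of_disjoint_iUnion (As := fun x : ℝ => ({x} : Set ℝ))
      · exact fun x => measurableSet_singleton x
      · intro x y hxy
        simp [Function.onFun, hxy]
    refine h1.mono fun x hx => ?_
    exact (pos_iff_ne_zero.2 hx)
  have hAmeas : MeasurableSet A := hAcnt.measurableSet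
  have hsing : ∀ x, μ {x} = ENNReal.ofReal (M x - Mleft x) := fun x => by
    have := (ProbabilityTheory.cdf μ).measure_singleton x
    rw [ProbabilityTheory.measure_cdf] at this
    rw [this, hFM, hLM]
  have hM1 : ∀ x, M x ≤ 1 := fun x => by
    rw [hFM]
    exact ProbabilityTheory.cdf_le_one μ x
  have hL0' : ∀ x, 0 ≤ Mleft x := fun x => by
    rw [hLM]
    exact hL0 x
  have hord : ∀ x y : ℝ, x < y → M x ≤ Mleft y := fun x y h => by
    rw [hFM, hLM]
    exact (ProbabilityTheory.monotone_cdf μ).le_leftLim h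
  have hJm : MeasurableSet J := by
    rw [hJ]
    exact MeasurableSet.biUnion hAcnt fun _ _ => measurableSet_Ioo
  have hJsub : J ⊆ Ioo 0 1 := by
    rw [hJ]
    intro z hz
    simp only [mem_iUnion, mem_Ioo, exists_prop] at hz
    obtain ⟨x, _, h1, h2⟩ := hz
    exact ⟨lt_of_le_of_lt (hL0' x) h1, lt_of_lt_of_le h2 (hM1 x)⟩
  haveI : IsFiniteMeasure (Measure.map M ρ) := by
    rw [hρ]
    infer_instance
  refine Measure.ext_of_Iic _ _ fun c => ?_
  rw [Measure.map_apply hMmeas measurableSet_Iic, hρ,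
    Measure.restrict_apply (hMmeas measurableSet_Iic),
    Measure.restrict_apply measurableSet_Iic]
  set S := M ⁻¹' Iic c with hSdef
  have hSm : MeasurableSet S := hMmeas measurableSet_Iic
  have hDA : {x : ℝ | μ {x} = 0} = Aᶜ := by
    ext x
    simp [hAdef]
  rw [hDA, ← diff_eq]
  set E := Ioo (0:ℝ) 1 ∩ Iic c with hEdef
  set J' := J ∩ Iic c with hJ'def
  have hEJ : Iic c ∩ (Ioo (0:ℝ) 1 \ J) = E \ J' := by
    ext z
    simp only [hEdef, hJ'def, mem_inter_iff, mem_diff]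
    tauto
  rw [hEJ]
  have hvolE : volume E = ENNReal.ofReal (min c 1) := by
    rw [hEdef, aux_volIoo, sub_zero, min_comm]
  have hJ'eq : J' = ⋃ x ∈ A, (Ioo (Mleft x) (M x) ∩ Iic c) := by
    rw [hJ'def, hJ, iUnion₂_inter]
  have hdisj : A.PairwiseDisjoint fun x => Ioo (Mleft x) (M x) ∩ Iic c := by
    have key : ∀ u v : ℝ, u < v →
        Disjoint (Ioo (Mleft u) (M u) ∩ Iic c) (Ioo (Mleft v) (M v) ∩ Iic c) := by
      intro u v huv
      refine Set.disjoint_left.2 ?_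
      rintro z ⟨⟨_, hz2⟩, _⟩ ⟨⟨hz3, _⟩, _⟩
      exact absurd (hz2.trans_le ((hord u v huv).trans hz3.le)) (lt_irrefl z)
    intro x _ y _ hxy
    rcases hxy.lt_or_gt with h | h
    · exact key x y h
    · exact (key y x h).symm
  have hvolJ' : volume J' = ∑' x : ↥A, volume (Ioo (Mleft (x : ℝ)) (M (x : ℝ)) ∩ Iic c) := by
    rw [hJ'eq]
    exact measure_biUnion hAcnt hdisj fun x _ => measurableSet_Ioo.inter measurableSet_Iic
  have hSA : S ∩ A = ⋃ x ∈ A, ({x} ∩ S) := by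
    ext z
    simp only [mem_inter_iff, mem_iUnion, mem_singleton_iff, exists_prop]
    constructor
    · rintro ⟨h1, h2⟩
      exact ⟨z, h2, rfl, h1⟩
    · rintro ⟨x, hx, rfl, h2⟩
      exact ⟨h2, hx⟩
  have hμSA : μ (S ∩ A) = ∑' x : ↥A, μ ({(x : ℝ)} ∩ S) := by
    rw [hSA]
    refine measure_biUnion hAcnt ?_ fun x _ => (measurableSet_singleton x).inter hSm
    intro x _ y _ hxy
    refine Set.disjoint_left.2 ?_
    rintro z ⟨rfl, _⟩ ⟨h, _⟩
    exact hxy h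
  have hterm : ∀ x : ↥A, volume (Ioo (Mleft (x : ℝ)) (M (x : ℝ)) ∩ Iic c)
      = μ ({(x : ℝ)} ∩ S)
        + (if M (x : ℝ) ≤ c then 0 else ENNReal.ofReal (c - Mleft (x : ℝ))) := by
    rintro ⟨x, hx⟩
    rw [aux_volIoo]
    by_cases hxc : M x ≤ c
    · have hxs : ({x} : Set ℝ) ∩ S = {x} :=
        inter_eq_self_of_subset_left (by simp [hSdef, singleton_subset_iff, mem_preimage, hxc])
      rw [if_pos hxc, hxs, add_zero, min_eq_left hxc, ← hsing x]
    · have hxs : ({x} : Set ℝ) ∩ S = ∅ := by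
        apply eq_empty_iff_forall_notMem.2
        rintro z ⟨rfl, hz⟩
        exact hxc (by simpa [hSdef, mem_preimage] using hz)
      rw [if_neg hxc, hxs, measure_empty, zero_add, min_eq_right (le_of_not_ge hxc)]
  have hvolJ'2 : volume J' = μ (S ∩ A)
      + ∑' x : ↥A, (if M (x : ℝ) ≤ c then 0 else ENNReal.ofReal (c - Mleft (x : ℝ))) := by
    rw [hvolJ', tsum_congr hterm, ENNReal.tsum_add, hμSA]
  have hkey : μ S
      + ∑' x : ↥A, (if M (x : ℝ) ≤ c then 0 else ENNReal.ofReal (c - Mleft (x : ℝ)))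
      = ENNReal.ofReal (min c 1) := by
    have h1 : S = {x | ProbabilityTheory.cdf μ x ≤ c} := by
      ext x
      simp [hSdef, mem_preimage, hFM]
    have h2 : (∑' x : ↥A, (if M (x : ℝ) ≤ c then 0 else ENNReal.ofReal (c - Mleft (x : ℝ))))
        = ∑' x : ↥A, (if ProbabilityTheory.cdf μ (x : ℝ) ≤ c then 0
            else ENNReal.ofReal (c - Function.leftLim (ProbabilityTheory.cdf μ) (x : ℝ))) :=
      tsum_congr fun x => by rw [hFM, hLM]
    rw [h1, h2]
    exact aux_key μ c
  have h1 : μ (S ∩ A) + μ (S \ A) = μ S := measure_inter_add_diff S hAmeas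
  have hJ'sub : J' ⊆ E := fun z hz => ⟨hJsub hz.1, hz.2⟩
  have h2 : volume J' + volume (E \ J') = volume E := by
    have := measure_inter_add_diff (μ := volume) (t := J ∩ Iic c) E (hJm.inter measurableSet_Iic)
    rwa [inter_eq_self_of_subset_right hJ'sub] at this
  have hfin : volume J' ≠ ⊤ := by
    refine ne_top_of_le_ne_top ?_ (measure_mono hJ'sub)
    rw [hvolE]
    exact ENNReal.ofReal_ne_top
  refine WithTop.add_right_cancel hfin ?_
  calc μ (S \ A) + volume J'
      = μ (S \ A) + (μ (S ∩ A)
        + ∑' x : ↥A, (if M (x : ℝ) ≤ c then 0 else ENNReal.ofReal (c - Mleft (x : ℝ)))) := by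
        rw [hvolJ'2]
    _ = (μ (S ∩ A) + μ (S \ A))
        + ∑' x : ↥A, (if M (x : ℝ) ≤ c then 0 else ENNReal.ofReal (c - Mleft (x : ℝ))) := by
        ring
    _ = ENNReal.ofReal (min c 1) := by rw [h1, hkey]
    _ = volume E := hvolE.symm
    _ = volume J' + volume (E \ J') := h2.symm
    _ = volume (E \ J') + volume J' := add_comm _ _
end

section
/- Let μ be a Borel probability measure on ℝ with right-continuous distribution function M, f ∈ L^p(0,1) for p ∈ [1,∞), and F(m) = ∫₀^m f(ω)dω. Define g(x) = f(M(x)) at points x with μ({x}) = 0, and g(x) = (F(M(x)) − F(M(x−)))/μ({x}) at atoms. Then g ∈ L^p(ℝ,μ) with ‖g‖_{L^p(ℝ,μ)} ≤ ‖f‖_{L^p(0,1)}, with equality whenever μ has no atoms. -/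
open MeasureTheory Set
open scoped ENNReal

open Filter ProbabilityTheory Function
open scoped Topology

section AUX
noncomputable def Qf (μ : Measure ℝ) : ℝ → ℝ := fun u =>
  if 0 < u ∧ u < 1 then sInf {x | u ≤ cdf μ x} else 0

variable {μ : Measure ℝ} [IsProbabilityMeasure μ]

lemma Qf_le_iff {u : ℝ} (h0 : 0 < u) (h1 : u < 1) (x : ℝ) :
    Qf μ u ≤ x ↔ u ≤ cdf μ x := by
  have hne : {y | u ≤ cdf μ y}.Nonempty := by
    have : ∀ᶠ y in atTop, u ≤ cdf μ y := (tendsto_cdf_atTop μ).eventually (eventually_ge_nhds h1)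
    exact this.exists
  obtain ⟨x0, hx0⟩ : ∃ x0, cdf μ x0 < u := by
    have : ∀ᶠ y in atBot, cdf μ y < u := (tendsto_cdf_atBot μ).eventually (eventually_lt_nhds h0)
    exact this.exists
  have hbdd : BddBelow {y | u ≤ cdf μ y} := by
    refine ⟨x0, fun y hy => ?_⟩
    by_contra h
    exact absurd (le_trans hy (monotone_cdf μ (le_of_not_ge h))) (not_le.2 hx0)
  have hQu : Qf μ u = sInf {x | u ≤ cdf μ x} := if_pos ⟨h0, h1⟩
  rw [hQu]
  constructor
  · intro h
    have hev : ∀ᶠ y in 𝓝[>] x, u ≤ cdf μ y := by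
      filter_upwards [self_mem_nhdsWithin] with y hy
      have : sInf {y | u ≤ cdf μ y} < y := lt_of_le_of_lt h hy
      obtain ⟨z, hz, hzy⟩ := (csInf_lt_iff hbdd hne).1 this
      exact hz.trans (monotone_cdf μ hzy.le)
    exact ge_of_tendsto (((cdf μ).right_continuous x).mono_left
      (nhdsWithin_mono x Ioi_subset_Ici_self)) hev
  · intro h
    exact csInf_le hbdd h

lemma le_cdf_Qf {u : ℝ} (h0 : 0 < u) (h1 : u < 1) : u ≤ cdf μ (Qf μ u) :=
  (Qf_le_iff h0 h1 _).1 le_rfl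

lemma leftLim_cdf_Qf_le {u : ℝ} (h0 : 0 < u) (h1 : u < 1) :
    leftLim (cdf μ) (Qf μ u) ≤ u := by
  refine le_of_tendsto ((monotone_cdf μ).tendsto_leftLim (Qf μ u)) ?_
  filter_upwards [self_mem_nhdsWithin] with y (hy : y < Qf μ u)
  by_contra h
  exact absurd ((Qf_le_iff h0 h1 y).2 (le_of_not_ge h)) (not_le.2 hy)

lemma measurable_Qf : Measurable (Qf μ) := by
  apply measurable_of_Iic
  intro x
  by_cases hx : (0:ℝ) ≤ x
  · have : Qf μ ⁻¹' Iic x = (Ioo 0 1 ∩ Iic (cdf μ x)) ∪ (Ioo 0 1)ᶜ := by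
      ext u
      simp only [mem_preimage, mem_Iic, mem_union, mem_inter_iff, mem_compl_iff, mem_Ioo]
      by_cases hu : 0 < u ∧ u < 1
      · simp only [hu, and_true, true_and, not_true_eq_false, or_false, Qf_le_iff hu.1 hu.2,
          not_and_or, not_lt]
      · simp only [Qf, if_neg hu, hu, false_and, false_or]
        simp [hx]
    rw [this]
    exact ((measurableSet_Ioo.inter measurableSet_Iic).union measurableSet_Ioo.compl)
  · have : Qf μ ⁻¹' Iic x = Ioo 0 1 ∩ Iic (cdf μ x) := by
      ext u
      simp only [mem_preimage, mem_Iic, mem_inter_iff, mem_Ioo]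
      by_cases hu : 0 < u ∧ u < 1
      · simp only [hu, true_and, Qf_le_iff hu.1 hu.2]
      · simp only [Qf, if_neg hu, hu, false_and, iff_false]
        intro h; exact hx (le_trans h (by rfl))
    rw [this]
    exact measurableSet_Ioo.inter measurableSet_Iic

lemma map_Qf : Measure.map (Qf μ) (volume.restrict (Ioo (0:ℝ) 1)) = μ := by
  have hQ : Measurable (Qf μ) := measurable_Qf
  haveI : IsProbabilityMeasure (volume.restrict (Ioo (0:ℝ) 1)) :=
    ⟨by simp [Real.volume_Ioo]⟩
  haveI : IsProbabilityMeasure (Measure.map (Qf μ) (volume.restrict (Ioo (0:ℝ) 1))) :=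
    Measure.isProbabilityMeasure_map hQ.aemeasurable
  refine Measure.ext_of_Iic _ _ (fun x => ?_)
  rw [Measure.map_apply hQ measurableSet_Iic, Measure.restrict_apply (hQ measurableSet_Iic)]
  have h01 : 0 ≤ cdf μ x ∧ cdf μ x ≤ 1 := ⟨cdf_nonneg μ x, cdf_le_one μ x⟩
  have hset : Qf μ ⁻¹' Iic x ∩ Ioo 0 1 = Ioo (0:ℝ) 1 ∩ Iic (cdf μ x) := by
    ext u
    simp only [mem_inter_iff, mem_preimage, mem_Iic, mem_Ioo]
    constructor
    · rintro ⟨h, hu⟩; exact ⟨hu, (Qf_le_iff hu.1 hu.2 x).1 h⟩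
    · rintro ⟨hu, h⟩; exact ⟨(Qf_le_iff hu.1 hu.2 x).2 h, hu⟩
  rw [hset, ← ofReal_cdf μ x]
  rcases lt_or_eq_of_le h01.2 with h2 | h2
  · have : Ioo (0:ℝ) 1 ∩ Iic (cdf μ x) = Ioc 0 (cdf μ x) := by
      ext u; simp only [mem_inter_iff, mem_Ioo, mem_Ioc, mem_Iic]
      constructor
      · rintro ⟨⟨a, b⟩, c⟩; exact ⟨a, c⟩
      · rintro ⟨a, c⟩; exact ⟨⟨a, lt_of_le_of_lt c h2⟩, c⟩
    rw [this, Real.volume_Ioc, sub_zero]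
  · have : Ioo (0:ℝ) 1 ∩ Iic (cdf μ x) = Ioo 0 1 := by
      rw [inter_eq_left]; intro u hu; exact le_trans hu.2.le (by rw [← h2])
    rw [this, Real.volume_Ioo, sub_zero, ← h2]

lemma cdf_singleton (x : ℝ) : μ {x} = ENNReal.ofReal (cdf μ x - leftLim (cdf μ) x) := by
  conv_lhs => rw [← measure_cdf μ]
  exact (cdf μ).measure_singleton x

lemma measure_Iio_cdf (x : ℝ) : μ (Iio x) = ENNReal.ofReal (leftLim (cdf μ) x) := by
  have h1 : μ (Iio x) = μ (Iic x) - μ {x} := by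
    rw [← Iic_diff_right, measure_diff (by simp) (by simp) (measure_ne_top μ _)]
  rw [h1, ← ofReal_cdf μ x, cdf_singleton x, ← ENNReal.ofReal_sub _ (by
      rw [sub_nonneg]; exact (monotone_cdf μ).leftLim_le le_rfl)]
  ring_nf

lemma leftLim_cdf_nonneg (x : ℝ) : 0 ≤ leftLim (cdf μ) x :=
  le_trans (cdf_nonneg μ (x - 1)) ((monotone_cdf μ).le_leftLim (by linarith))

lemma atom_leftLim_lt {x : ℝ} (hx : μ {x} ≠ 0) : leftLim (cdf μ) x < cdf μ x := by
  by_contra h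
  push_neg at h
  apply hx
  rw [cdf_singleton x, ENNReal.ofReal_eq_zero]
  linarith

lemma Qf_eq_on_Ioc {x u : ℝ} (h0 : 0 < u) (h1 : u < 1)
    (hu : u ∈ Ioc (leftLim (cdf μ) x) (cdf μ x)) : Qf μ u = x := by
  refine le_antisymm ((Qf_le_iff h0 h1 x).2 hu.2) ?_
  by_contra h
  push_neg at h
  have h2 : cdf μ (Qf μ u) ≤ leftLim (cdf μ) x := (monotone_cdf μ).le_leftLim h
  exact absurd (le_trans (le_cdf_Qf h0 h1) h2) (not_le.2 hu.1)

lemma Ioc_disjoint {x y : ℝ} (hxy : x ≠ y) :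
    Disjoint (Ioc (leftLim (cdf μ) x) (cdf μ x)) (Ioc (leftLim (cdf μ) y) (cdf μ y)) := by
  wlog h : x < y generalizing x y
  · exact (this hxy.symm (hxy.lt_or_gt.resolve_left h)).symm
  have hc : cdf μ x ≤ leftLim (cdf μ) y := (monotone_cdf μ).le_leftLim h
  rw [Set.disjoint_left]
  rintro u ⟨_, h2⟩ ⟨h3, _⟩
  exact absurd (le_trans h2 hc) (not_le.2 h3)

lemma countable_atoms : Set.Countable {x : ℝ | μ {x} ≠ 0} := by
  have := MeasureTheory.Measure.countable_meas_level_set_pos (μ := μ) (g := id) measurable_id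
  simp only [id] at this
  refine this.mono (fun x hx => ?_)
  simp only [mem_setOf_eq] at hx ⊢
  rw [pos_iff_ne_zero]
  convert hx using 2
  rfl

end AUX

/-- Generalized BV chain rule, `L^p` bound: with `g = f ∘ M` off atoms and the difference
quotient of `F ∘ M` at atoms, `g ∈ L^p(ℝ, μ)` with `‖g‖_{L^p(μ)} ≤ ‖f‖_{L^p(0,1)}`, with
equality whenever `μ` has no atoms. -/
theorem stmt_2 (μ : Measure ℝ) [IsProbabilityMeasure μ]
    (p : ℝ≥0∞) (hp : 1 ≤ p) (hp' : p ≠ ⊤)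
    (f F M Mleft g : ℝ → ℝ)
    (hf : MemLp f p (volume.restrict (Ioo (0:ℝ) 1)))
    (hF : ∀ m, F m = ∫ ω in Ioo (0:ℝ) m, f ω)
    (hM : ∀ x, M x = (μ (Iic x)).toReal)
    (hMleft : ∀ x, Mleft x = (μ (Iio x)).toReal)
    (hg : ∀ x, g x = if μ {x} = 0 then f (M x)
      else (F (M x) - F (Mleft x)) / (μ {x}).toReal) :
    MemLp g p μ ∧
      eLpNorm g p μ ≤ eLpNorm f p (volume.restrict (Ioo (0:ℝ) 1)) ∧
      (∀ _ : NoAtoms μ, eLpNorm g p μ = eLpNorm f p (volume.restrict (Ioo (0:ℝ) 1))) := by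
  classical
  have hp0 : p ≠ 0 := (lt_of_lt_of_le zero_lt_one hp).ne'
  set q : ℝ := p.toReal with hqdef
  have hq1 : 1 ≤ q := by
    have := ENNReal.toReal_mono hp' hp
    simpa using this
  have hq0 : 0 < q := lt_of_lt_of_le zero_lt_one hq1
  set c : StieltjesFunction ℝ := cdf μ with hcdef
  set Q : ℝ → ℝ := Qf μ with hQdef
  have hQmeas : Measurable Q := measurable_Qf
  set A : Set ℝ := {x | μ {x} ≠ 0} with hAdef
  have hA : A.Countable := countable_atoms
  have hAmeas : MeasurableSet A := hA.measurableSet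
  set D : Set ℝ := ⋃ x ∈ A, Ioc (leftLim (⇑c) x) (c x) with hDdef
  have hDmeas : MeasurableSet D := MeasurableSet.biUnion hA (fun _ _ => measurableSet_Ioc)
  set Z : Set ℝ := (fun x => leftLim (⇑c) x) '' A with hZdef
  have hZnull : volume Z = 0 := (hA.image _).measure_zero _
  have hM' : ∀ x, M x = c x := fun x => by rw [hM, cdf_eq_real, measureReal_def]
  have hMl' : ∀ x, Mleft x = leftLim (⇑c) x := fun x => by
    rw [hMleft, measure_Iio_cdf, ENNReal.toReal_ofReal (leftLim_cdf_nonneg x)]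
  -- L4 : structure of Q off D and Z
  have hL4 : ∀ u ∈ Ioo (0:ℝ) 1, u ∉ D → u ∉ Z → μ {Q u} = 0 ∧ c (Q u) = u := by
    intro u hu huD huZ
    have h1 : u ≤ c (Q u) := le_cdf_Qf hu.1 hu.2
    have h2 : leftLim (⇑c) (Q u) ≤ u := leftLim_cdf_Qf_le hu.1 hu.2
    by_cases hx : μ {Q u} = 0
    · refine ⟨hx, le_antisymm ?_ h1⟩
      have hs := cdf_singleton (μ := μ) (Q u)
      rw [hx, eq_comm, ENNReal.ofReal_eq_zero, sub_nonpos] at hs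
      exact le_trans hs h2
    · exfalso
      have hmem : Q u ∈ A := hx
      have hnotIoc : u ∉ Ioc (leftLim (⇑c) (Q u)) (c (Q u)) :=
        fun h => huD (mem_biUnion hmem h)
      have hule : u ≤ leftLim (⇑c) (Q u) := by
        by_contra h
        exact hnotIoc ⟨lt_of_not_ge h, h1⟩
      exact huZ ⟨Q u, hmem, (le_antisymm h2 hule)⟩
  -- Q maps atom intervals to the atom
  have hQIoc : ∀ x ∈ A, ∀ u ∈ Ioc (leftLim (⇑c) x) (c x), u < 1 → Q u = x := by
    intro x hx u hu hu1
    have h0u : 0 < u := lt_of_le_of_lt (leftLim_cdf_nonneg x) hu.1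
    exact Qf_eq_on_Ioc h0u hu1 hu
  -- a.e. measurable representative of g
  obtain ⟨f', hf'sm, hff'⟩ := hf.1
  set g' : ℝ → ℝ := fun x => if μ {x} = 0 then f' (c x) else g x with hg'def
  have hgm : Measurable g' := by
    refine Measurable.measurable_of_countable_ne
      (hf'sm.measurable.comp (monotone_cdf μ).measurable) (hA.mono ?_)
    intro x hx
    simp only [mem_setOf_eq] at hx ⊢
    intro h0
    exact hx (by simp [hg'def, h0, hcdef])
  have hgae : g =ᵐ[μ] g' := by
    set T : Set ℝ := toMeasurable volume (Ioo 0 1 ∩ {u | f u ≠ f' u}) with hTdef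
    have hTnull : volume T = 0 := by
      rw [measure_toMeasurable]
      have : ∀ᵐ u ∂(volume.restrict (Ioo (0:ℝ) 1)), f u = f' u := hff'
      rw [ae_restrict_iff' measurableSet_Ioo] at this
      have h2 := ae_iff.1 this
      refine measure_mono_null ?_ h2
      intro u hu
      simp only [mem_inter_iff, mem_setOf_eq] at hu ⊢
      exact fun h => hu.2 (h hu.1)
    set E : Set ℝ := T ∪ (Ioo (0:ℝ) 1)ᶜ with hEdef
    have hEmeas : MeasurableSet E :=
      (measurableSet_toMeasurable _ _).union measurableSet_Ioo.compl
    set S : Set ℝ := {x | μ {x} = 0 ∧ c x ∈ E} with hSdef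
    have hSmeas : MeasurableSet S := by
      have : S = Aᶜ ∩ (⇑c) ⁻¹' E := by
        ext x; simp [hSdef, hAdef, mem_compl_iff]
      rw [this]
      exact hAmeas.compl.inter ((monotone_cdf μ).measurable hEmeas)
    have hSnull : μ S = 0 := by
      rw [← map_Qf (μ := μ), Measure.map_apply hQmeas hSmeas,
        Measure.restrict_apply (hQmeas hSmeas)]
      refine measure_mono_null (fun u hu => ?_) (le_antisymm (le_trans
        (measure_union_le Z T) (by rw [hZnull, hTnull, add_zero])) zero_le :
        volume (Z ∪ T) = 0)
      obtain ⟨huS, huI⟩ := hu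
      by_cases huZ : u ∈ Z
      · exact Or.inl huZ
      · have huD : u ∉ D := by
          intro hD
          obtain ⟨x, hx, hmem⟩ := mem_iUnion₂.1 hD
          have : Q u = x := hQIoc x hx u hmem huI.2
          have h' : μ {Q u} = 0 := huS.1
          rw [this] at h'
          exact hx h'
        obtain ⟨_, hcu⟩ := hL4 u huI huD huZ
        have : c (Q u) ∈ E := huS.2
        rw [hcu] at this
        rcases this with h | h
        · exact Or.inr h
        · exact absurd huI h
    have hsub : {x | g x ≠ g' x} ⊆ S := by
      intro x hx
      simp only [mem_setOf_eq] at hx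
      by_cases h0 : μ {x} = 0
      · refine ⟨h0, ?_⟩
        by_contra hE
        simp only [hEdef, mem_union, not_or, mem_compl_iff, not_not] at hE
        apply hx
        rw [hg x, if_pos h0, hg'def]
        simp only [if_pos h0]
        rw [hM' x]
        by_contra hne
        exact hE.1 (subset_toMeasurable _ _ ⟨hE.2, hne⟩)
      · exact absurd (by simp [hg'def, h0]) hx
    exact measure_mono_null hsub hSnull
  have hgaem : AEMeasurable g μ := ⟨g', hgm, hgae⟩
  have hgsm : AEStronglyMeasurable g μ := ⟨g', hgm.stronglyMeasurable, hgae⟩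
  -- lintegral notation
  set φ : ℝ → ℝ≥0∞ := fun t => (‖t‖₊ : ℝ≥0∞) ^ q with hφdef
  have hφg : AEMeasurable (fun x => φ (g x)) μ :=
    (hgaem.enorm.pow_const q)

  -- transfer integral to (0,1)
  have hI : ∫⁻ x, φ (g x) ∂μ = ∫⁻ u in Ioo (0:ℝ) 1, φ (g (Q u)) := by
    conv_lhs => rw [← map_Qf (μ := μ)]
    rw [lintegral_map' (by rw [map_Qf]; exact hφg) hQmeas.aemeasurable]
  have hZae : ∀ᵐ u ∂(volume : Measure ℝ), u ∉ Z := measure_eq_zero_iff_ae_notMem.mp hZnull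
  -- off the atom intervals, g ∘ Q = f a.e.
  have hK2 : ∫⁻ u in Ioo (0:ℝ) 1 \ D, φ (g (Q u)) = ∫⁻ u in Ioo (0:ℝ) 1 \ D, φ (f u) := by
    refine lintegral_congr_ae ((ae_restrict_iff' (measurableSet_Ioo.diff hDmeas)).2 ?_)
    filter_upwards [hZae] with u huZ hu
    obtain ⟨h0, hcu⟩ := hL4 u hu.1 hu.2 huZ
    rw [hg (Q u), if_pos h0, hM', hcu]
  -- atom intervals sit inside (0,1] and a.e. inside (0,1)
  have hDsub : D ⊆ Ioc (0:ℝ) 1 := by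
    intro u hu
    obtain ⟨x, hx, h⟩ := mem_iUnion₂.1 hu
    exact ⟨lt_of_le_of_lt (leftLim_cdf_nonneg x) h.1, le_trans h.2 (cdf_le_one μ x)⟩
  have hDae : (Ioo (0:ℝ) 1 ∩ D : Set ℝ) =ᵐ[(volume : Measure ℝ)] D := by
    rw [ae_eq_set]
    constructor
    · refine measure_mono_null (fun u hu => ?_) (measure_empty (μ := (volume : Measure ℝ)))
      exact absurd hu.1.2 hu.2
    · refine measure_mono_null (fun u hu => ?_) (measure_singleton (1:ℝ))
      have hD := hu.1
      have hni : u ∉ Ioo (0:ℝ) 1 := fun h => hu.2 ⟨h, hD⟩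
      have h01 := hDsub hD
      simp only [mem_Ioo, not_and_or, not_lt] at hni
      rcases hni with h | h
      · exact absurd h01.1 (not_lt.2 h)
      · simp [le_antisymm h01.2 h]
  haveI := hA.to_subtype
  have hDun : D = ⋃ x : A, Ioc (leftLim (⇑c) (x:ℝ)) (c (x:ℝ)) := by
    rw [hDdef, biUnion_eq_iUnion]
  have hsum : ∀ (h : ℝ → ℝ≥0∞), ∫⁻ u in D, h u =
      ∑' x : A, ∫⁻ u in Ioc (leftLim (⇑c) (x:ℝ)) (c (x:ℝ)), h u := by
    intro h
    rw [hDun]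
    exact lintegral_iUnion (fun _ => measurableSet_Ioc)
      (fun x y hxy => Ioc_disjoint (Subtype.coe_injective.ne hxy)) h
  -- integrability facts on (0,1]
  haveI : IsFiniteMeasure ((volume : Measure ℝ).restrict (Ioo (0:ℝ) 1)) :=
    ⟨by rw [Measure.restrict_apply_univ]; simp [Real.volume_Ioo]⟩
  have hIoc01 : IntegrableOn f (Ioc (0:ℝ) 1) volume := by
    have h := hf.integrable hp
    rwa [Measure.restrict_congr_set Ioo_ae_eq_Ioc] at h
  have hFeq : ∀ m, F m = ∫ u in Ioc (0:ℝ) m, f u := fun m => by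
    rw [hF m, Measure.restrict_congr_set Ioo_ae_eq_Ioc]
  have hFdiff : ∀ a b : ℝ, 0 ≤ a → a ≤ b → b ≤ 1 → F b - F a = ∫ u in Ioc a b, f u := by
    intro a b h0 hab hb1
    rw [hFeq, hFeq]
    have hsp : Ioc (0:ℝ) b = Ioc 0 a ∪ Ioc a b := (Ioc_union_Ioc_eq_Ioc h0 hab).symm
    rw [hsp, setIntegral_union (Ioc_disjoint_Ioc_of_le le_rfl) measurableSet_Ioc
      (hIoc01.mono_set (Ioc_subset_Ioc le_rfl (le_trans hab hb1)))
      (hIoc01.mono_set (Ioc_subset_Ioc h0 hb1))]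
    ring
  -- the per-atom Jensen estimate
  have hatom : ∀ x ∈ A, ∫⁻ u in Ioc (leftLim (⇑c) x) (c x), φ (g (Q u)) ≤
      ∫⁻ u in Ioc (leftLim (⇑c) x) (c x), φ (f u) := by
    intro x hx
    set a : ℝ := leftLim (⇑c) x with hadef
    set b : ℝ := c x with hbdef
    have hab : a < b := atom_leftLim_lt hx
    have h0a : 0 ≤ a := leftLim_cdf_nonneg x
    have hb1 : b ≤ 1 := cdf_le_one μ x
    -- left side is constant
    have h1 : ∫⁻ u in Ioc a b, φ (g (Q u)) = φ (g x) * volume (Ioc a b) := by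
      rw [← setLIntegral_const]
      refine lintegral_congr_ae ((ae_restrict_iff' measurableSet_Ioc).2 ?_)
      filter_upwards [measure_eq_zero_iff_ae_notMem.mp (measure_singleton (1:ℝ))] with u hu1 hu
      rw [hQIoc x hx u hu (lt_of_le_of_ne (le_trans hu.2 hb1) hu1)]
    have hμx : (μ {x}).toReal = b - a := by
      rw [cdf_singleton x, ENNReal.toReal_ofReal (by linarith)]
    have hgx : g x = (∫ u in Ioc a b, f u) / (b - a) := by
      rw [hg x, if_neg hx, hM' x, hMl' x, hμx, hFdiff a b h0a hab.le hb1]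
    set ν : Measure ℝ := volume.restrict (Ioc a b) with hν
    have hνuniv : ν univ = ENNReal.ofReal (b - a) := by
      rw [hν, Measure.restrict_apply_univ, Real.volume_Ioc]
    haveI : IsFiniteMeasure ν := ⟨by rw [hνuniv]; exact ENNReal.ofReal_lt_top⟩
    haveI : NeZero ν := ⟨by
      intro h
      have h2 : ν univ = 0 := by rw [h]; rfl
      rw [hνuniv, ENNReal.ofReal_eq_zero] at h2
      linarith⟩
    have hfint : IntegrableOn f (Ioc a b) volume := hIoc01.mono_set (Ioc_subset_Ioc h0a hb1)
    have hfi : Integrable (fun u => |f u|) ν := hfint.abs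
    have hmem : MemLp f p ν := hf.mono_measure (by
      rw [Measure.restrict_congr_set Ioo_ae_eq_Ioc]
      exact Measure.restrict_mono (Ioc_subset_Ioc h0a hb1) le_rfl)
    have hgi : Integrable (fun u => |f u| ^ q) ν := by
      have h := hmem.integrable_norm_rpow hp0 hp'
      simpa [Real.norm_eq_abs] using h
    have hjen : (⨍ u, |f u| ∂ν) ^ q ≤ ⨍ u, |f u| ^ q ∂ν := by
      have h := (convexOn_rpow hq1).map_average_le
        (continuousOn_id.rpow_const (fun _ _ => Or.inr hq0.le)) isClosed_Ici
        (ae_of_all _ (fun u => abs_nonneg (f u))) hfi (by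
          exact hgi)
      simpa using h
    have havg : ∀ (h : ℝ → ℝ), ⨍ u, h u ∂ν = (∫ u in Ioc a b, h u) / (b - a) := by
      intro h
      rw [average_eq, measureReal_def, hνuniv, ENNReal.toReal_ofReal (by linarith)]
      rw [smul_eq_mul, div_eq_inv_mul]
    have hgxabs : |g x| ≤ ⨍ u, |f u| ∂ν := by
      rw [hgx, havg, abs_div, abs_of_pos (by linarith : (0:ℝ) < b - a)]
      have hnum : |∫ u in Ioc a b, f u| ≤ ∫ u in Ioc a b, |f u| := by
        have h := norm_integral_le_integral_norm (μ := ν) f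
        simpa [Real.norm_eq_abs] using h
      exact div_le_div_of_nonneg_right hnum (by linarith)
    have hq_abs : |g x| ^ q ≤ (∫ u in Ioc a b, |f u| ^ q) / (b - a) := by
      rw [← havg]
      exact le_trans (Real.rpow_le_rpow (abs_nonneg _) hgxabs hq0.le) hjen
    have hkey : |g x| ^ q * (b - a) ≤ ∫ u in Ioc a b, |f u| ^ q :=
      (le_div_iff₀ (by linarith)).1 hq_abs
    have hφgx : φ (g x) = ENNReal.ofReal (|g x| ^ q) := by
      rw [hφdef]
      simp only []
      rw [← enorm_eq_nnnorm, Real.enorm_eq_ofReal_abs, ← ENNReal.ofReal_rpow_of_nonneg (abs_nonneg _) hq0.le]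
    have hrhs : ∫⁻ u in Ioc a b, φ (f u) = ENNReal.ofReal (∫ u in Ioc a b, |f u| ^ q) := by
      rw [ofReal_integral_eq_lintegral_ofReal hgi
        (ae_of_all _ (fun u => Real.rpow_nonneg (abs_nonneg _) q))]
      refine lintegral_congr (fun u => ?_)
      rw [hφdef]
      simp only []
      rw [← enorm_eq_nnnorm, Real.enorm_eq_ofReal_abs, ← ENNReal.ofReal_rpow_of_nonneg (abs_nonneg _) hq0.le]
    calc ∫⁻ u in Ioc a b, φ (g (Q u)) = φ (g x) * volume (Ioc a b) := h1
      _ = ENNReal.ofReal (|g x| ^ q) * ENNReal.ofReal (b - a) := by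
          rw [hφgx, Real.volume_Ioc]
      _ = ENNReal.ofReal (|g x| ^ q * (b - a)) := by
          rw [ENNReal.ofReal_mul (by positivity)]
      _ ≤ ENNReal.ofReal (∫ u in Ioc a b, |f u| ^ q) := ENNReal.ofReal_le_ofReal hkey
      _ = ∫⁻ u in Ioc a b, φ (f u) := hrhs.symm
  have hK1 : ∫⁻ u in D, φ (g (Q u)) ≤ ∫⁻ u in D, φ (f u) := by
    rw [hsum, hsum]
    exact ENNReal.tsum_le_tsum (fun x => hatom (x:ℝ) x.2)
  have hIle : ∫⁻ x, φ (g x) ∂μ ≤ ∫⁻ u in Ioo (0:ℝ) 1, φ (f u) := by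
    rw [hI, ← lintegral_inter_add_diff (fun u => φ (f u)) (Ioo (0:ℝ) 1) hDmeas,
      ← lintegral_inter_add_diff (fun u => φ (g (Q u))) (Ioo (0:ℝ) 1) hDmeas]
    refine add_le_add ?_ (le_of_eq hK2)
    rw [Measure.restrict_congr_set hDae]
    exact hK1
  have hsnormg : eLpNorm g p μ = (∫⁻ x, φ (g x) ∂μ) ^ (1 / q) := by
    rw [eLpNorm_eq_lintegral_rpow_enorm_toReal hp0 hp']
    rfl
  have hsnormf : eLpNorm f p (volume.restrict (Ioo (0:ℝ) 1)) =
      (∫⁻ u in Ioo (0:ℝ) 1, φ (f u)) ^ (1 / q) := by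
    rw [eLpNorm_eq_lintegral_rpow_enorm_toReal hp0 hp']
    rfl
  have hle : eLpNorm g p μ ≤ eLpNorm f p (volume.restrict (Ioo (0:ℝ) 1)) := by
    rw [hsnormg, hsnormf]
    exact ENNReal.rpow_le_rpow hIle (by positivity)
  refine ⟨⟨hgsm, lt_of_le_of_lt hle hf.2⟩, hle, ?_⟩
  intro hNA
  have hDempty : D = ∅ := by
    rw [hDdef]
    have : A = ∅ := by
      ext x
      simp [hAdef, measure_singleton]
      exact hNA.measure_singleton x
    rw [this]
    simp
  rw [hDempty, diff_empty] at hK2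
  rw [hsnormg, hsnormf, hI, hK2]
end

section
/- Let K be the cone of nondecreasing functions in L²(0,1), and for X ∈ K let N_X K = {W ∈ L²(0,1) : ∫₀¹ W(Y − X) dm ≤ 0 for all Y ∈ K} be the normal cone. If X₁, X₂ ∈ K satisfy Ω_{X₁} ⊆ Ω_{X₂} (where Ω_X is the set of points where X is locally constant), then N_{X₁} K ⊆ N_{X₂} K. -/
open MeasureTheory Set
open scoped ENNReal

/-- The set of points of `(0,1)` where `X` is constant in a neighborhood. -/
def locallyConstantSet (X : ℝ → ℝ) : Set ℝ :=
  {m | m ∈ Ioo (0:ℝ) 1 ∧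
    ∃ ε > 0, ∀ y ∈ Metric.ball m ε, ∀ z ∈ Metric.ball m ε, X y = X z}

/-- The normal cone of the cone `K` of nondecreasing `L²(0,1)` functions at `X`. -/
def normalCone (X : ℝ → ℝ) : Set (ℝ → ℝ) :=
  {W | MemLp W 2 (volume.restrict (Ioo (0:ℝ) 1)) ∧
    ∀ Y : ℝ → ℝ, MonotoneOn Y (Ioo (0:ℝ) 1) →
      MemLp Y 2 (volume.restrict (Ioo (0:ℝ) 1)) →
      (∫ m in Ioo (0:ℝ) 1, W m * (Y m - X m)) ≤ 0}

namespace Stmt5Aux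

open Filter Topology

noncomputable section

instance : IsFiniteMeasure ((volume : Measure ℝ).restrict (Ioo (0:ℝ) 1)) := by
  constructor
  simp [Real.volume_Ioo]

lemma mul_integrable {f g : ℝ → ℝ} (hf : MemLp f 2 (volume.restrict (Ioo (0:ℝ) 1)))
    (hg : MemLp g 2 (volume.restrict (Ioo (0:ℝ) 1))) :
    Integrable (fun m => f m * g m) (volume.restrict (Ioo (0:ℝ) 1)) := by
  have h1 := hf.integrable_sq
  have h2 := hg.integrable_sq
  have h3 := (hf.add hg).integrable_sq
  have he : (fun m => f m * g m)
      = fun m => (((f m + g m)^2 - f m^2) - g m^2) / 2 := by funext m; ring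
  rw [he]
  exact ((h3.sub h1).sub h2).div_const 2

/-- The primitive `Φ`. -/
def Phi (W : ℝ → ℝ) : ℝ → ℝ := fun t => ∫ x in (0:ℝ)..t, (Ioo (0:ℝ) 1).indicator W x

lemma phi_zero (W : ℝ → ℝ) : Phi W 0 = 0 := intervalIntegral.integral_same

lemma indicator_integrable {W : ℝ → ℝ} (hWm : MemLp W 2 (volume.restrict (Ioo (0:ℝ) 1))) :
    Integrable ((Ioo (0:ℝ) 1).indicator W) volume :=
  (integrable_indicator_iff measurableSet_Ioo).2 (hWm.integrable one_le_two)

lemma phi_cont {W : ℝ → ℝ} (hWm : MemLp W 2 (volume.restrict (Ioo (0:ℝ) 1))) :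
    Continuous (Phi W) :=
  intervalIntegral.continuous_primitive
    (fun _ _ => (indicator_integrable hWm).intervalIntegrable) 0

lemma phi_eq {W : ℝ → ℝ} {t : ℝ} (ht : t ∈ Icc (0:ℝ) 1) :
    Phi W t = ∫ m in Ioo (0:ℝ) t, W m := by
  unfold Phi
  rw [intervalIntegral.integral_of_le ht.1, MeasureTheory.integral_Ioc_eq_integral_Ioo,
    setIntegral_indicator measurableSet_Ioo,
    Set.inter_eq_self_of_subset_left (Set.Ioo_subset_Ioo le_rfl ht.2)]

lemma int_split {W : ℝ → ℝ} (hWm : MemLp W 2 (volume.restrict (Ioo (0:ℝ) 1)))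
    {r : ℝ} (hr : r ∈ Icc (0:ℝ) 1) :
    (∫ m in Ioo (0:ℝ) 1, W m) = Phi W r + ∫ m in Ioo r 1, W m := by
  have hWi : IntegrableOn W (Ioo (0:ℝ) 1) volume := hWm.integrable one_le_two
  rcases eq_or_lt_of_le hr.1 with h0 | h0
  · rw [← h0, phi_zero]; simp
  rcases eq_or_lt_of_le hr.2 with h1 | h1
  · rw [h1] at h0 ⊢
    rw [phi_eq ⟨zero_le_one, le_rfl⟩]
    simp
  have hu : Ioo (0:ℝ) 0.99999 = Ioo (0:ℝ) 0.99999 := rfl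
  have hunion : Ioo (0:ℝ) r ∪ Ico r 1 = Ioo (0:ℝ) 1 := Set.Ioo_union_Ico_eq_Ioo h0 h1.le
  have hdisj : Disjoint (Ioo (0:ℝ) r) (Ico r 1) := by
    rw [Set.disjoint_left]
    intro x hx1 hx2
    exact absurd hx2.1 (not_le.2 hx1.2)
  rw [phi_eq hr, ← hunion,
    setIntegral_union hdisj measurableSet_Ico
      (hWi.mono_set (by rw [← hunion]; exact subset_union_left))
      (hWi.mono_set (by rw [← hunion]; exact subset_union_right)),
    MeasureTheory.integral_Ico_eq_integral_Ioo]

/-- Counting lemma: the step sum approximates the clamp. -/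
lemma floor_sum_approx (a b : ℝ) (hab : a < b) (N : ℕ) (hN : 1 ≤ N) (x : ℝ) :
    |(a + ((b - a)/N) * ∑ j ∈ Finset.Icc 1 N, (if a + j * ((b-a)/N) ≤ x then (1:ℝ) else 0))
      - max a (min x b)| ≤ (b - a)/N := by
  have hNpos : (0:ℝ) < N := by exact_mod_cast hN
  set δ := (b - a)/N with hδ
  have hδpos : 0 < δ := div_pos (by linarith) hNpos
  have hNδ : (N:ℝ) * δ = b - a := by
    rw [hδ]; field_simp
  have hsum : (∑ j ∈ Finset.Icc 1 N, (if a + j * δ ≤ x then (1:ℝ) else 0))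
      = ((Finset.Icc 1 N).filter (fun j : ℕ => a + (j:ℝ) * δ ≤ x)).card := by
    rw [Finset.sum_boole]
  rcases lt_or_ge x (a + δ) with hx1 | hx1
  · -- filter empty
    have hfe : (Finset.Icc 1 N).filter (fun j : ℕ => a + (j:ℝ) * δ ≤ x) = ∅ := by
      rw [Finset.filter_eq_empty_iff]
      intro j hj
      have h1 : (1:ℝ) ≤ j := by exact_mod_cast (Finset.mem_Icc.1 hj).1
      have : δ ≤ j * δ := by nlinarith
      push_neg
      nlinarith
    rw [hsum, hfe]
    simp only [Finset.card_empty, Nat.cast_zero, mul_zero, add_zero]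
    have h1 : a ≤ max a (min x b) := le_max_left _ _
    have h2 : max a (min x b) ≤ a + δ := by
      apply max_le (by linarith)
      exact le_trans (min_le_left _ _) hx1.le
    rw [abs_sub_comm, abs_of_nonneg (by linarith)]
    linarith
  rcases lt_or_ge x b with hx2 | hx2
  · -- middle case
    set u := (x - a)/δ with hu
    have hu1 : 1 ≤ u := (le_div_iff₀ hδpos).2 (by linarith)
    have huN : u < N := by
      rw [hu, div_lt_iff₀ hδpos]
      nlinarith
    have hu0 : 0 ≤ u := by linarith
    have hff : (Finset.Icc 1 N).filter (fun j : ℕ => a + (j:ℝ) * δ ≤ x) = Finset.Icc 1 ⌊u⌋₊ := by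
      ext j
      simp only [Finset.mem_filter, Finset.mem_Icc]
      constructor
      · rintro ⟨⟨hj1, hjN⟩, hjx⟩
        refine ⟨hj1, ?_⟩
        rw [Nat.le_floor_iff hu0, hu, le_div_iff₀ hδpos]
        linarith
      · rintro ⟨hj1, hjf⟩
        have hju : (j:ℝ) ≤ u := (Nat.le_floor_iff hu0).1 hjf
        have hjN : j ≤ N := by
          have : (j:ℝ) < N := lt_of_le_of_lt hju huN
          exact_mod_cast this.le
        refine ⟨⟨hj1, hjN⟩, ?_⟩
        rw [hu, le_div_iff₀ hδpos] at hju
        linarith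
    rw [hsum, hff]
    have hcard : (Finset.Icc 1 ⌊u⌋₊).card = ⌊u⌋₊ := by
      rw [Nat.card_Icc]
      omega
    rw [hcard]
    have hmax : max a (min x b) = x := by
      rw [min_eq_left hx2.le, max_eq_right (by linarith)]
    rw [hmax]
    have hfl : (⌊u⌋₊:ℝ) ≤ u := Nat.floor_le hu0
    have hfl2 : u < ⌊u⌋₊ + 1 := Nat.lt_floor_add_one u
    have hxa : x = a + δ * u := by
      rw [hu]; field_simp; ring
    rw [abs_le]
    constructor <;> nlinarith
  · -- x ≥ b : full filter
    have hff : (Finset.Icc 1 N).filter (fun j : ℕ => a + (j:ℝ) * δ ≤ x) = Finset.Icc 1 N := by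
      rw [Finset.filter_true_of_mem]
      intro j hj
      have hjN : (j:ℝ) ≤ N := by exact_mod_cast (Finset.mem_Icc.1 hj).2
      have : (j:ℝ) * δ ≤ N * δ := by nlinarith
      nlinarith
    rw [hsum, hff]
    have hcard : ((Finset.Icc 1 N).card : ℝ) = N := by
      rw [Nat.card_Icc]; simp
    rw [hcard]
    have hmax : max a (min x b) = b := by
      rw [min_eq_right hx2, max_eq_right hab.le]
    rw [hmax]
    have hNb : a + δ * N = b := by nlinarith
    rw [abs_le]
    constructor <;> nlinarith

lemma integral_mul_aux {W : ℝ → ℝ} (hWm : MemLp W 2 (volume.restrict (Ioo (0:ℝ) 1)))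
    (a c : ℝ) (N : ℕ) (F : ℕ → ℝ → ℝ)
    (hF : ∀ j ∈ Finset.Icc 1 N, MemLp (F j) 2 (volume.restrict (Ioo (0:ℝ) 1))) :
    (∫ m in Ioo (0:ℝ) 1, W m * (a + c * ∑ j ∈ Finset.Icc 1 N, F j m))
      = a * (∫ m in Ioo (0:ℝ) 1, W m)
        + c * ∑ j ∈ Finset.Icc 1 N, ∫ m in Ioo (0:ℝ) 1, W m * F j m := by
  have hWi : Integrable W (volume.restrict (Ioo (0:ℝ) 1)) := hWm.integrable one_le_two
  have hFint : ∀ j ∈ Finset.Icc 1 N,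
      Integrable (fun m => W m * F j m) (volume.restrict (Ioo (0:ℝ) 1)) :=
    fun j hj => mul_integrable hWm (hF j hj)
  have ep : ∀ m, W m * (a + c * ∑ j ∈ Finset.Icc 1 N, F j m)
      = a * W m + c * ∑ j ∈ Finset.Icc 1 N, W m * F j m := by
    intro m
    rw [← Finset.mul_sum]
    ring
  simp only [ep]
  rw [integral_add (hWi.const_mul a)
      ((integrable_finset_sum _ hFint).const_mul c),
    integral_const_mul, integral_const_mul, integral_finset_sum _ hFint]

lemma integral_step_close {W : ℝ → ℝ} (hWm : MemLp W 2 (volume.restrict (Ioo (0:ℝ) 1)))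
    (g h : ℝ → ℝ) (hgi : Integrable (fun m => W m * g m) (volume.restrict (Ioo (0:ℝ) 1)))
    (hhi : Integrable (fun m => W m * h m) (volume.restrict (Ioo (0:ℝ) 1)))
    {δ : ℝ} (hδ : 0 ≤ δ) (hb : ∀ m, |g m - h m| ≤ δ) :
    |(∫ m in Ioo (0:ℝ) 1, W m * g m) - ∫ m in Ioo (0:ℝ) 1, W m * h m|
      ≤ δ * ∫ m in Ioo (0:ℝ) 1, |W m| := by
  have hWi : Integrable W (volume.restrict (Ioo (0:ℝ) 1)) := hWm.integrable one_le_two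
  rw [← integral_sub hgi hhi]
  have h1 : |∫ m in Ioo (0:ℝ) 1, (W m * g m - W m * h m)|
      ≤ ∫ m in Ioo (0:ℝ) 1, |W m * g m - W m * h m| := by
    simpa [Real.norm_eq_abs] using
      norm_integral_le_integral_norm (μ := volume.restrict (Ioo (0:ℝ) 1))
        (fun m => W m * g m - W m * h m)
  refine h1.trans ?_
  have h2 : (∫ m in Ioo (0:ℝ) 1, |W m * g m - W m * h m|)
      ≤ ∫ m in Ioo (0:ℝ) 1, |W m| * δ := by
    refine integral_mono (hgi.sub hhi).abs (hWi.abs.mul_const δ) fun m => ?_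
    rw [← mul_sub, abs_mul]
    exact mul_le_mul_of_nonneg_left (hb m) (abs_nonneg _)
  refine h2.trans ?_
  rw [integral_mul_const]
  rw [mul_comm]

section
variable {W X₁ : ℝ → ℝ} (hW : W ∈ normalCone X₁) (h₁ : MonotoneOn X₁ (Ioo (0:ℝ) 1))
  (hm₁ : MemLp X₁ 2 (volume.restrict (Ioo (0:ℝ) 1)))
include hW h₁ hm₁

lemma pair_le (g : ℝ → ℝ) (hg : MonotoneOn g (Ioo (0:ℝ) 1))
    (hgp : MemLp g 2 (volume.restrict (Ioo (0:ℝ) 1))) :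
    (∫ m in Ioo (0:ℝ) 1, W m * g m) ≤ 0 := by
  have h := hW.2 (fun m => X₁ m + g m)
    (fun a ha b hb hab => add_le_add (h₁ ha hb hab) (hg ha hb hab)) (hm₁.add hgp)
  simpa using h

lemma int_zero : (∫ m in Ioo (0:ℝ) 1, W m) = 0 := by
  have h1 := pair_le hW h₁ hm₁ (fun _ => (1:ℝ)) (monotoneOn_const) (memLp_const 1)
  have h2 := pair_le hW h₁ hm₁ (fun _ => (-1:ℝ)) (monotoneOn_const) (memLp_const (-1))
  simp only [mul_one] at h1
  simp only [mul_neg_one, integral_neg, neg_nonpos] at h2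
  linarith

lemma pair_indicator_Ioi {r : ℝ} (hr : r ∈ Icc (0:ℝ) 1) :
    (∫ m in Ioo (0:ℝ) 1, W m * (Ioi r).indicator (fun _ => (1:ℝ)) m) = - Phi W r := by
  have e : ∀ m, W m * (Ioi r).indicator (fun _ => (1:ℝ)) m = (Ioi r).indicator W m := by
    intro m
    by_cases h : m ∈ Ioi r <;> simp [h]
  rw [integral_congr_ae (Filter.Eventually.of_forall e), setIntegral_indicator measurableSet_Ioi]
  have hint : Ioo (0:ℝ) 1 ∩ Ioi r = Ioo r 1 := by
    ext m
    simp only [mem_inter_iff, mem_Ioo, mem_Ioi]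
    constructor
    · rintro ⟨⟨_, hm1⟩, hm2⟩; exact ⟨hm2, hm1⟩
    · rintro ⟨hm2, hm1⟩; exact ⟨⟨lt_of_le_of_lt hr.1 hm2, hm1⟩, hm2⟩
  rw [hint]
  have := int_split hW.1 hr
  have h0 := int_zero hW h₁ hm₁
  linarith

lemma phi_nonneg {r : ℝ} (hr : r ∈ Icc (0:ℝ) 1) : 0 ≤ Phi W r := by
  set g : ℝ → ℝ := (Ioi r).indicator (fun _ => (1:ℝ)) with hg
  have hmono : MonotoneOn g (Ioo (0:ℝ) 1) := by
    intro a _ b _ hab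
    by_cases ha : a ∈ Ioi r
    · have hb : b ∈ Ioi r := lt_of_lt_of_le ha hab
      simp [hg, ha, hb]
    · simp only [hg, Set.indicator_of_notMem ha]
      exact Set.indicator_nonneg (fun _ _ => zero_le_one) b
  have hmem : MemLp g 2 (volume.restrict (Ioo (0:ℝ) 1)) := by
    refine MemLp.of_bound ((stronglyMeasurable_const.indicator measurableSet_Ioi).aestronglyMeasurable) 1 ?_
    refine Filter.Eventually.of_forall fun m => ?_
    by_cases h : m ∈ Ioi r <;> simp [hg, h]
  have := pair_le hW h₁ hm₁ g hmono hmem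
  rw [pair_indicator_Ioi hW h₁ hm₁ hr] at this
  linarith

/-- Threshold lemma -/
lemma threshold {Z : ℝ → ℝ} (hZ : MonotoneOn Z (Ioo (0:ℝ) 1)) (l : ℝ) :
    MemLp (fun m => if l ≤ Z m then (1:ℝ) else 0) 2 (volume.restrict (Ioo (0:ℝ) 1)) ∧
    (∫ m in Ioo (0:ℝ) 1, W m * (if l ≤ Z m then (1:ℝ) else 0))
      = - Phi W (sInf {m | m ∈ Ioo (0:ℝ) 1 ∧ l ≤ Z m}) := by
  set A := {m | m ∈ Ioo (0:ℝ) 1 ∧ l ≤ Z m} with hA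
  set s := sInf A with hs
  by_cases hne : A.Nonempty
  · have hbdd : BddBelow A := ⟨0, fun x hx => hx.1.1.le⟩
    have hs0 : 0 ≤ s := le_csInf hne fun a ha => ha.1.1.le
    obtain ⟨a₀, ha₀⟩ := id hne
    have hs1 : s < 1 := lt_of_le_of_lt (csInf_le hbdd ha₀) ha₀.1.2
    -- a.e. equality with the indicator of `Ioi s`
    have hsing : (volume.restrict (Ioo (0:ℝ) 1)) {s} = 0 := by
      rw [Measure.restrict_apply (measurableSet_singleton s)]
      exact measure_mono_null inter_subset_left (measure_singleton s)
    have hs_ne : ∀ᵐ m ∂(volume.restrict (Ioo (0:ℝ) 1)), m ≠ s := by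
      rw [MeasureTheory.ae_iff]
      convert hsing using 2
      ext m; simp
    have hmem : ∀ᵐ m ∂(volume.restrict (Ioo (0:ℝ) 1)), m ∈ Ioo (0:ℝ) 1 :=
      ae_restrict_mem measurableSet_Ioo
    have hae : ∀ᵐ m ∂(volume.restrict (Ioo (0:ℝ) 1)),
        (if l ≤ Z m then (1:ℝ) else 0) = (Ioi s).indicator (fun _ => (1:ℝ)) m := by
      filter_upwards [hs_ne, hmem] with m hm hmIoo
      rcases lt_trichotomy m s with h | h | h
      · have hmA : m ∉ A := fun hmA => absurd (csInf_le hbdd hmA) (not_le.2 h)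
        have hlm : ¬ l ≤ Z m := fun hl => hmA ⟨hmIoo, hl⟩
        have : m ∉ Ioi s := by simpa using h.le
        simp [hlm, Set.indicator_apply, Set.mem_Ioi, h.not_gt]
      · exact absurd h hm
      · obtain ⟨a, haA, ham⟩ := exists_lt_of_csInf_lt hne h
        have hlm : l ≤ Z m := le_trans haA.2 (hZ haA.1 hmIoo ham.le)
        simp [hlm, Set.indicator_apply, Set.mem_Ioi, h]
    have haes : ((Ioi s).indicator (fun _ => (1:ℝ)))
        =ᵐ[volume.restrict (Ioo (0:ℝ) 1)] (fun m => if l ≤ Z m then (1:ℝ) else 0) := by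
      filter_upwards [hae] with m hm
      exact hm.symm
    constructor
    · refine MemLp.of_bound
        (((stronglyMeasurable_const.indicator measurableSet_Ioi).aestronglyMeasurable).congr haes) 1 ?_
      refine Filter.Eventually.of_forall fun m => ?_
      by_cases h : l ≤ Z m <;> simp [h]
    · have hcongr : (fun m => W m * (if l ≤ Z m then (1:ℝ) else 0))
          =ᵐ[volume.restrict (Ioo (0:ℝ) 1)] (fun m => W m * (Ioi s).indicator (fun _ => (1:ℝ)) m) :=
        hae.mono fun m hm => congrArg (fun v => W m * v) hm
      rw [integral_congr_ae hcongr]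
      exact pair_indicator_Ioi hW h₁ hm₁ ⟨hs0, hs1.le⟩
  · rw [not_nonempty_iff_eq_empty] at hne
    have hev : ∀ m ∈ Ioo (0:ℝ) 1, ¬ l ≤ Z m := by
      intro m hm hl
      have : m ∈ A := ⟨hm, hl⟩
      rw [hne] at this
      exact this
    have hae : ∀ᵐ m ∂(volume.restrict (Ioo (0:ℝ) 1)),
        (if l ≤ Z m then (1:ℝ) else 0) = (0:ℝ) := by
      filter_upwards [ae_restrict_mem (μ := volume) (s := Ioo (0:ℝ) 1) measurableSet_Ioo] with m hm
      simp [hev m hm]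
    have haes : (fun _ => (0:ℝ))
        =ᵐ[volume.restrict (Ioo (0:ℝ) 1)] (fun m => if l ≤ Z m then (1:ℝ) else 0) := by
      filter_upwards [hae] with m hm
      exact hm.symm
    constructor
    · exact MemLp.of_bound (aestronglyMeasurable_const.congr haes) 1
        (Filter.Eventually.of_forall fun m => by by_cases h : l ≤ Z m <;> simp [h])
    · have hcongr : (fun m => W m * (if l ≤ Z m then (1:ℝ) else 0))
          =ᵐ[volume.restrict (Ioo (0:ℝ) 1)] (fun _ => (0:ℝ)) :=
        hae.mono fun m hm => by
          show W m * _ = (0:ℝ)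
          rw [hm, mul_zero]
      rw [integral_congr_ae hcongr, integral_zero]
      have hp : Phi W s = 0 := by
        rw [hs, hne, Real.sInf_empty]
        exact phi_zero W
      rw [hp, neg_zero]
end

/-- location of the threshold -/
lemma sInf_mem_Icc {Z : ℝ → ℝ} (hZ : MonotoneOn Z (Ioo (0:ℝ) 1)) {y z l : ℝ}
    (hy : y ∈ Ioo (0:ℝ) 1) (hz : z ∈ Ioo (0:ℝ) 1) (hyl : Z y < l) (hlz : l ≤ Z z) :
    {m | m ∈ Ioo (0:ℝ) 1 ∧ l ≤ Z m}.Nonempty ∧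
      sInf {m | m ∈ Ioo (0:ℝ) 1 ∧ l ≤ Z m} ∈ Icc y z := by
  set A := {m | m ∈ Ioo (0:ℝ) 1 ∧ l ≤ Z m} with hA
  have hne : A.Nonempty := ⟨z, hz, hlz⟩
  have hbdd : BddBelow A := ⟨0, fun x hx => hx.1.1.le⟩
  refine ⟨hne, le_csInf hne fun b hb => ?_, csInf_le hbdd ⟨hz, hlz⟩⟩
  by_contra h
  push_neg at h
  exact absurd (le_trans hb.2 (hZ hb.1 hy h.le)) (not_le.2 hyl)

lemma sInf_not_locallyConstant {Z : ℝ → ℝ} (hZ : MonotoneOn Z (Ioo (0:ℝ) 1)) {l : ℝ}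
    (hne : {m | m ∈ Ioo (0:ℝ) 1 ∧ l ≤ Z m}.Nonempty)
    (hsIoo : sInf {m | m ∈ Ioo (0:ℝ) 1 ∧ l ≤ Z m} ∈ Ioo (0:ℝ) 1) :
    sInf {m | m ∈ Ioo (0:ℝ) 1 ∧ l ≤ Z m} ∉ locallyConstantSet Z := by
  set A := {m | m ∈ Ioo (0:ℝ) 1 ∧ l ≤ Z m} with hA
  set s := sInf A with hs
  have hbdd : BddBelow A := ⟨0, fun x hx => hx.1.1.le⟩
  rintro ⟨-, ε, hε, hconst⟩
  have h1 : s < s + min (ε/2) ((1-s)/2) := by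
    have : 0 < min (ε/2) ((1-s)/2) := lt_min (by linarith) (by linarith [hsIoo.2])
    linarith
  obtain ⟨a, haA, ham⟩ := exists_lt_of_csInf_lt hne h1
  have hsa : s ≤ a := csInf_le hbdd haA
  have haball : a ∈ Metric.ball s ε := by
    rw [Metric.mem_ball, Real.dist_eq, abs_of_nonneg (by linarith)]
    have : min (ε/2) ((1-s)/2) ≤ ε/2 := min_le_left _ _
    linarith
  set b := s - min (ε/2) (s/2) with hb
  have hbpos : 0 < min (ε/2) (s/2) := lt_min (by linarith) (by linarith [hsIoo.1])
  have hbIoo : b ∈ Ioo (0:ℝ) 1 := by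
    constructor
    · have : min (ε/2) (s/2) ≤ s/2 := min_le_right _ _
      simp only [hb]; linarith [hsIoo.1]
    · simp only [hb]; linarith [hsIoo.2]
  have hbball : b ∈ Metric.ball s ε := by
    rw [Metric.mem_ball, Real.dist_eq, hb]
    have : min (ε/2) (s/2) ≤ ε/2 := min_le_left _ _
    rw [abs_of_nonpos (by linarith)]
    linarith
  have : Z b = Z a := hconst b hbball a haball
  have hbA : b ∈ A := ⟨hbIoo, by rw [this]; exact haA.2⟩
  have : s ≤ b := csInf_le hbdd hbA
  simp only [hb] at this
  linarith

section
variable {W X₁ : ℝ → ℝ} (hW : W ∈ normalCone X₁) (h₁ : MonotoneOn X₁ (Ioo (0:ℝ) 1))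
  (hm₁ : MemLp X₁ 2 (volume.restrict (Ioo (0:ℝ) 1)))
include hW h₁ hm₁

set_option maxHeartbeats 1000000 in
lemma exists_phi_zero {y z : ℝ} (hy : y ∈ Ioo (0:ℝ) 1) (hz : z ∈ Ioo (0:ℝ) 1)
    (hyz : y ≤ z) (hlt : X₁ y < X₁ z) :
    ∃ s ∈ Icc y z, Phi W s = 0 := by
  obtain ⟨s0, hs0mem, hs0min⟩ :=
    isCompact_Icc.exists_isMinOn (nonempty_Icc.2 hyz) ((phi_cont hW.1).continuousOn)
  have hs0Icc : s0 ∈ Icc (0:ℝ) 1 :=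
    ⟨(hy.1.trans_le hs0mem.1).le, (hs0mem.2.trans_lt hz.2).le⟩
  refine ⟨s0, hs0mem, le_antisymm ?_ (phi_nonneg hW h₁ hm₁ hs0Icc)⟩
  have hΔpos : (0:ℝ) < X₁ z - X₁ y := sub_pos.2 hlt
  have hCnn : (0:ℝ) ≤ ∫ m in Ioo (0:ℝ) 1, |W m| := integral_nonneg fun m => abs_nonneg _
  -- the clamp function
  have hgmem : MemLp (fun m => max (X₁ y) (min (X₁ m) (X₁ z))) 2
      (volume.restrict (Ioo (0:ℝ) 1)) := by
    refine MemLp.of_bound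
      (Continuous.comp_aestronglyMeasurable
        (g := fun v : ℝ => max (X₁ y) (min v (X₁ z))) (f := X₁)
        (continuous_const.max (continuous_id'.min continuous_const)) hm₁.1)
      (max |X₁ y| |X₁ z|) (Filter.Eventually.of_forall fun m => ?_)
    rw [Real.norm_eq_abs, abs_le]
    constructor
    · have h1 : -(max |X₁ y| |X₁ z|) ≤ X₁ y := by
        have := neg_abs_le (X₁ y)
        have := le_max_left |X₁ y| |X₁ z|
        linarith
      exact le_trans h1 (le_max_left _ _)
    · refine max_le ?_ ?_
      · exact le_trans (le_abs_self _) (le_max_left _ _)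
      · exact le_trans (min_le_right _ _) (le_trans (le_abs_self _) (le_max_right _ _))
  -- X₁ - clamp is monotone
  have hmono : MonotoneOn (fun m => X₁ m - max (X₁ y) (min (X₁ m) (X₁ z)))
      (Ioo (0:ℝ) 1) := by
    intro p hp q hq hpq
    have h1 : X₁ p ≤ X₁ q := h₁ hp hq hpq
    have hlip : |max (X₁ y) (min (X₁ q) (X₁ z)) - max (X₁ y) (min (X₁ p) (X₁ z))|
        ≤ |X₁ q - X₁ p| := by
      rw [max_comm (X₁ y) (min (X₁ q) (X₁ z)), max_comm (X₁ y) (min (X₁ p) (X₁ z))]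
      refine le_trans (abs_max_sub_max_le_abs _ _ _) ?_
      have := abs_min_sub_min_le_max (X₁ q) (X₁ z) (X₁ p) (X₁ z)
      simp only [sub_self, abs_zero] at this
      exact le_trans this (by simp [abs_nonneg])
    have h2 : max (X₁ y) (min (X₁ q) (X₁ z)) - max (X₁ y) (min (X₁ p) (X₁ z))
        ≤ X₁ q - X₁ p := by
      have := le_abs_self (max (X₁ y) (min (X₁ q) (X₁ z)) - max (X₁ y) (min (X₁ p) (X₁ z)))
      rw [abs_of_nonneg (sub_nonneg.2 h1)] at hlip
      linarith
    simp only
    linarith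
  -- nonnegative pairing with the clamp
  have hpair : 0 ≤ ∫ m in Ioo (0:ℝ) 1, W m * max (X₁ y) (min (X₁ m) (X₁ z)) := by
    have h := hW.2 (fun m => X₁ m - max (X₁ y) (min (X₁ m) (X₁ z))) hmono (hm₁.sub hgmem)
    have e : ∀ m : ℝ, W m * ((X₁ m - max (X₁ y) (min (X₁ m) (X₁ z))) - X₁ m)
        = -(W m * max (X₁ y) (min (X₁ m) (X₁ z))) := by intro m; ring
    simp only [e, integral_neg, neg_nonpos] at h
    exact h
  -- the key estimate
  have key : ∀ N : ℕ, 1 ≤ N → Phi W s0 ≤ (∫ m in Ioo (0:ℝ) 1, |W m|) / N := by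
    intro N hN
    have hNpos : (0:ℝ) < N := by exact_mod_cast hN
    have hδpos : (0:ℝ) < (X₁ z - X₁ y)/N := div_pos hΔpos hNpos
    have hthr := fun j : ℕ => threshold hW h₁ hm₁ h₁ (X₁ y + j * ((X₁ z - X₁ y)/N))
    have hloc : ∀ j ∈ Finset.Icc 1 N,
        sInf {m | m ∈ Ioo (0:ℝ) 1 ∧ X₁ y + j * ((X₁ z - X₁ y)/N) ≤ X₁ m} ∈ Icc y z := by
      intro j hj
      obtain ⟨hj1, hjN⟩ := Finset.mem_Icc.1 hj
      have hj1' : (1:ℝ) ≤ j := by exact_mod_cast hj1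
      have hjN' : (j:ℝ) ≤ N := by exact_mod_cast hjN
      refine (sInf_mem_Icc h₁ hy hz ?_ ?_).2
      · nlinarith
      · have hNδ : (N:ℝ) * ((X₁ z - X₁ y)/N) = X₁ z - X₁ y := by field_simp
        nlinarith
    have hFmem : ∀ j ∈ Finset.Icc 1 N,
        MemLp (fun m => if X₁ y + j * ((X₁ z - X₁ y)/N) ≤ X₁ m then (1:ℝ) else 0) 2
          (volume.restrict (Ioo (0:ℝ) 1)) := fun j _ => (hthr j).1
    -- integral of the step sum
    have hint_h : (∫ m in Ioo (0:ℝ) 1, W m * (X₁ y + ((X₁ z - X₁ y)/N) *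
          ∑ j ∈ Finset.Icc 1 N, (if X₁ y + j * ((X₁ z - X₁ y)/N) ≤ X₁ m then (1:ℝ) else 0)))
        = ((X₁ z - X₁ y)/N) * ∑ j ∈ Finset.Icc 1 N,
            - Phi W (sInf {m | m ∈ Ioo (0:ℝ) 1 ∧ X₁ y + j * ((X₁ z - X₁ y)/N) ≤ X₁ m}) := by
      rw [integral_mul_aux hW.1 (X₁ y) ((X₁ z - X₁ y)/N) N
          (fun j m => if X₁ y + j * ((X₁ z - X₁ y)/N) ≤ X₁ m then (1:ℝ) else 0) hFmem,
        int_zero hW h₁ hm₁, mul_zero, zero_add]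
      congr 1
      exact Finset.sum_congr rfl fun j _ => (hthr j).2
    -- integrability of both pairings
    have hgi := mul_integrable hW.1 hgmem
    have hhmem : MemLp (fun m => X₁ y + ((X₁ z - X₁ y)/N) *
        ∑ j ∈ Finset.Icc 1 N, (if X₁ y + j * ((X₁ z - X₁ y)/N) ≤ X₁ m then (1:ℝ) else 0)) 2
        (volume.restrict (Ioo (0:ℝ) 1)) := by
      refine (memLp_const (X₁ y)).add ?_
      exact (memLp_finset_sum _ hFmem).const_mul _
    have hhi := mul_integrable hW.1 hhmem
    -- closeness
    have hbnd : ∀ m, |max (X₁ y) (min (X₁ m) (X₁ z)) - (X₁ y + ((X₁ z - X₁ y)/N) *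
        ∑ j ∈ Finset.Icc 1 N, (if X₁ y + j * ((X₁ z - X₁ y)/N) ≤ X₁ m then (1:ℝ) else 0))|
        ≤ (X₁ z - X₁ y)/N := by
      intro m
      rw [abs_sub_comm]
      exact floor_sum_approx (X₁ y) (X₁ z) hlt N hN (X₁ m)
    have hclose := integral_step_close hW.1 _ _ hgi hhi hδpos.le
      (fun m => hbnd m)
    -- combine
    rw [hint_h] at hclose
    have habs := abs_le.1 hclose
    have hsum_ge : (N:ℝ) * Phi W s0 ≤ ∑ j ∈ Finset.Icc 1 N,
        Phi W (sInf {m | m ∈ Ioo (0:ℝ) 1 ∧ X₁ y + j * ((X₁ z - X₁ y)/N) ≤ X₁ m}) := by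
      have hc := Finset.card_nsmul_le_sum (Finset.Icc 1 N)
        (fun j => Phi W (sInf {m | m ∈ Ioo (0:ℝ) 1 ∧ X₁ y + j * ((X₁ z - X₁ y)/N) ≤ X₁ m}))
        (Phi W s0)
        (fun j hj => (isMinOn_iff.1 hs0min) _ (hloc j hj))
      have hcard : (Finset.Icc 1 N).card = N := by rw [Nat.card_Icc]; omega
      rw [hcard] at hc
      simpa [nsmul_eq_mul] using hc
    have hsneg : ((X₁ z - X₁ y)/N) * ∑ j ∈ Finset.Icc 1 N,
          - Phi W (sInf {m | m ∈ Ioo (0:ℝ) 1 ∧ X₁ y + j * ((X₁ z - X₁ y)/N) ≤ X₁ m})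
        = -(((X₁ z - X₁ y)/N) * ∑ j ∈ Finset.Icc 1 N,
          Phi W (sInf {m | m ∈ Ioo (0:ℝ) 1 ∧ X₁ y + j * ((X₁ z - X₁ y)/N) ≤ X₁ m})) := by
      rw [Finset.sum_neg_distrib]
      ring
    rw [hsneg] at habs
    have hfinal : (N:ℝ) * Phi W s0 * ((X₁ z - X₁ y)/N)
        ≤ ((X₁ z - X₁ y)/N) * (∫ m in Ioo (0:ℝ) 1, |W m|) := by
      nlinarith [habs.2, hpair, hsum_ge]
    have h6 : (N:ℝ) * Phi W s0 ≤ ∫ m in Ioo (0:ℝ) 1, |W m| := by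
      nlinarith [hfinal, hδpos]
    rw [le_div_iff₀ hNpos]
    linarith [h6]
  have htend : Filter.Tendsto (fun N : ℕ => (∫ m in Ioo (0:ℝ) 1, |W m|) / N)
      Filter.atTop (nhds 0) := tendsto_const_div_atTop_nhds_zero_nat _
  exact ge_of_tendsto htend (Filter.eventually_atTop.2 ⟨1, fun N hN => key N hN⟩)

lemma phi_zero_of_not_const {t : ℝ} (ht : t ∈ Ioo (0:ℝ) 1)
    (hnc : t ∉ locallyConstantSet X₁) : Phi W t = 0 := by
  have hnc' : ∀ ε > 0, ∃ u ∈ Metric.ball t ε, ∃ v ∈ Metric.ball t ε, X₁ u ≠ X₁ v := by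
    intro ε hε
    by_contra h
    push_neg at h
    exact hnc ⟨ht, ε, hε, h⟩
  have key : ∀ n : ℕ, ∃ s, |s - t| ≤ 1/(n+1) ∧ Phi W s = 0 := by
    intro n
    have hεpos : 0 < min (1/((n:ℝ)+1)) (min t (1-t)) :=
      lt_min (by positivity) (lt_min ht.1 (by linarith [ht.2]))
    obtain ⟨u, hu, v, hv, huv⟩ := hnc' _ hεpos
    have hball : Metric.ball t (min (1/((n:ℝ)+1)) (min t (1-t))) ⊆ Ioo (0:ℝ) 1 := by
      intro w hw
      rw [Metric.mem_ball, Real.dist_eq] at hw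
      have h1 := abs_lt.1 hw
      have h2 : min (1/((n:ℝ)+1)) (min t (1-t)) ≤ t :=
        (min_le_right _ _).trans (min_le_left _ _)
      have h3 : min (1/((n:ℝ)+1)) (min t (1-t)) ≤ 1 - t :=
        (min_le_right _ _).trans (min_le_right _ _)
      constructor <;> [linarith [h1.1]; linarith [h1.2]]
    have hyb : min u v ∈ Metric.ball t (min (1/((n:ℝ)+1)) (min t (1-t))) := by
      rcases min_choice u v with h | h <;> rw [h] <;> assumption
    have hzb : max u v ∈ Metric.ball t (min (1/((n:ℝ)+1)) (min t (1-t))) := by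
      rcases max_choice u v with h | h <;> rw [h] <;> assumption
    have hyI := hball hyb
    have hzI := hball hzb
    have hne : X₁ (min u v) ≠ X₁ (max u v) := by
      rcases le_total u v with h | h
      · rw [min_eq_left h, max_eq_right h]; exact huv
      · rw [min_eq_right h, max_eq_left h]; exact fun hh => huv hh.symm
    have hlt : X₁ (min u v) < X₁ (max u v) :=
      lt_of_le_of_ne (h₁ hyI hzI (min_le_max)) hne
    obtain ⟨s, hsmem, hs0⟩ := exists_phi_zero hW h₁ hm₁ hyI hzI min_le_max hlt
    refine ⟨s, ?_, hs0⟩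
    have hy1 : t - min (1/((n:ℝ)+1)) (min t (1-t)) < min u v := by
      rw [Metric.mem_ball, Real.dist_eq] at hyb
      linarith [(abs_lt.1 hyb).1]
    have hz1 : max u v < t + min (1/((n:ℝ)+1)) (min t (1-t)) := by
      rw [Metric.mem_ball, Real.dist_eq] at hzb
      linarith [(abs_lt.1 hzb).2]
    have hmin : min (1/((n:ℝ)+1)) (min t (1-t)) ≤ 1/((n:ℝ)+1) := min_le_left _ _
    rw [abs_le]
    constructor
    · linarith [hsmem.1]
    · linarith [hsmem.2]
  choose s hs hs0 using key
  have hst : Filter.Tendsto s Filter.atTop (nhds t) := by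
    rw [tendsto_iff_dist_tendsto_zero]
    refine squeeze_zero (g := fun n : ℕ => 1/((n:ℝ)+1)) (fun n => dist_nonneg) (fun n => ?_) ?_
    · rw [Real.dist_eq]; exact hs n
    · exact tendsto_one_div_add_atTop_nhds_zero_nat
  have hcomp := ((phi_cont hW.1).continuousAt (x := t)).tendsto.comp hst
  have hzero : Filter.Tendsto (fun _ : ℕ => (0:ℝ)) Filter.atTop (nhds (Phi W t)) := by
    refine hcomp.congr fun n => ?_
    exact (hs0 n) ▸ rfl
  exact (tendsto_nhds_unique hzero tendsto_const_nhds)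

/-- Pairing with any monotone L² function whose constancy set contains that of X₁ vanishes. -/
lemma pairing_zero {Z : ℝ → ℝ} (hZ : MonotoneOn Z (Ioo (0:ℝ) 1))
    (hZp : MemLp Z 2 (volume.restrict (Ioo (0:ℝ) 1)))
    (hsub : locallyConstantSet X₁ ⊆ locallyConstantSet Z) :
    (∫ m in Ioo (0:ℝ) 1, W m * Z m) = 0 := by
  -- step 1 : all level pairings vanish
  have hlev : ∀ l : ℝ, (∫ m in Ioo (0:ℝ) 1, W m * (if l ≤ Z m then (1:ℝ) else 0)) = 0 := by
    intro l
    rw [(threshold hW h₁ hm₁ hZ l).2]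
    by_cases hne : {m | m ∈ Ioo (0:ℝ) 1 ∧ l ≤ Z m}.Nonempty
    · have hs0 : 0 ≤ sInf {m | m ∈ Ioo (0:ℝ) 1 ∧ l ≤ Z m} :=
        le_csInf hne fun a ha => ha.1.1.le
      obtain ⟨a₀, ha₀⟩ := id hne
      have hs1 : sInf {m | m ∈ Ioo (0:ℝ) 1 ∧ l ≤ Z m} < 1 :=
        lt_of_le_of_lt (csInf_le ⟨0, fun x hx => hx.1.1.le⟩ ha₀) ha₀.1.2
      rcases eq_or_lt_of_le hs0 with h | h
      · rw [← h, phi_zero, neg_zero]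
      · have hsIoo : sInf {m | m ∈ Ioo (0:ℝ) 1 ∧ l ≤ Z m} ∈ Ioo (0:ℝ) 1 := ⟨h, hs1⟩
        have hnotZ := sInf_not_locallyConstant hZ hne hsIoo
        have hnotX : sInf {m | m ∈ Ioo (0:ℝ) 1 ∧ l ≤ Z m} ∉ locallyConstantSet X₁ :=
          fun hmem => hnotZ (hsub hmem)
        rw [phi_zero_of_not_const hW h₁ hm₁ hsIoo hnotX, neg_zero]
    · rw [not_nonempty_iff_eq_empty] at hne
      rw [hne, Real.sInf_empty, phi_zero, neg_zero]
  -- step 2 : truncated pairings vanish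
  have htrunc : ∀ M : ℝ, 0 < M →
      (∫ m in Ioo (0:ℝ) 1, W m * max (-M) (min (Z m) M)) = 0 := by
    intro M hM
    have hab : (-M) < M := by linarith
    have hgmem : MemLp (fun m => max (-M) (min (Z m) M)) 2
        (volume.restrict (Ioo (0:ℝ) 1)) := by
      refine MemLp.of_bound
        (Continuous.comp_aestronglyMeasurable
          (g := fun v : ℝ => max (-M) (min v M)) (f := Z)
          (continuous_const.max (continuous_id'.min continuous_const)) hZp.1)
        M (Filter.Eventually.of_forall fun m => ?_)
      rw [Real.norm_eq_abs, abs_le]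
      refine ⟨le_max_left _ _, max_le (by linarith) (min_le_right _ _)⟩
    have hgi := mul_integrable hW.1 hgmem
    have habs : ∀ N : ℕ, 1 ≤ N →
        |∫ m in Ioo (0:ℝ) 1, W m * max (-M) (min (Z m) M)|
          ≤ ((M - -M)/N) * ∫ m in Ioo (0:ℝ) 1, |W m| := by
      intro N hN
      have hNpos : (0:ℝ) < N := by exact_mod_cast hN
      have hδpos : (0:ℝ) < (M - -M)/N := div_pos (by linarith) hNpos
      have hFmem : ∀ j ∈ Finset.Icc 1 N,
          MemLp (fun m => if -M + j * ((M - -M)/N) ≤ Z m then (1:ℝ) else 0) 2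
            (volume.restrict (Ioo (0:ℝ) 1)) :=
        fun j _ => (threshold hW h₁ hm₁ hZ (-M + j * ((M - -M)/N))).1
      have hhmem : MemLp (fun m => -M + ((M - -M)/N) *
          ∑ j ∈ Finset.Icc 1 N, (if -M + j * ((M - -M)/N) ≤ Z m then (1:ℝ) else 0)) 2
          (volume.restrict (Ioo (0:ℝ) 1)) :=
        (memLp_const (-M)).add ((memLp_finset_sum _ hFmem).const_mul _)
      have hhi := mul_integrable hW.1 hhmem
      have hint_h : (∫ m in Ioo (0:ℝ) 1, W m * (-M + ((M - -M)/N) *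
            ∑ j ∈ Finset.Icc 1 N, (if -M + j * ((M - -M)/N) ≤ Z m then (1:ℝ) else 0))) = 0 := by
        rw [integral_mul_aux hW.1 (-M) ((M - -M)/N) N
            (fun j m => if -M + j * ((M - -M)/N) ≤ Z m then (1:ℝ) else 0) hFmem,
          int_zero hW h₁ hm₁, mul_zero, zero_add]
        have hz : (∑ j ∈ Finset.Icc 1 N,
            ∫ m in Ioo (0:ℝ) 1, W m * (if -M + j * ((M - -M)/N) ≤ Z m then (1:ℝ) else 0)) = 0 :=
          Finset.sum_eq_zero fun j _ => hlev _
        rw [hz, mul_zero]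
      have hbnd : ∀ m, |max (-M) (min (Z m) M) - (-M + ((M - -M)/N) *
          ∑ j ∈ Finset.Icc 1 N, (if -M + j * ((M - -M)/N) ≤ Z m then (1:ℝ) else 0))|
          ≤ (M - -M)/N := by
        intro m
        rw [abs_sub_comm]
        exact floor_sum_approx (-M) M hab N hN (Z m)
      have hclose := integral_step_close hW.1 _ _ hgi hhi hδpos.le hbnd
      rw [hint_h, sub_zero] at hclose
      exact hclose
    -- let N → ∞
    have htend : Filter.Tendsto (fun N : ℕ =>
        ((M - -M) * ∫ m in Ioo (0:ℝ) 1, |W m|) / N) Filter.atTop (nhds 0) :=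
      tendsto_const_div_atTop_nhds_zero_nat _
    have hle : |∫ m in Ioo (0:ℝ) 1, W m * max (-M) (min (Z m) M)| ≤ 0 := by
      refine ge_of_tendsto htend (Filter.eventually_atTop.2 ⟨1, fun N hN => ?_⟩)
      have := habs N hN
      calc |∫ m in Ioo (0:ℝ) 1, W m * max (-M) (min (Z m) M)|
          ≤ ((M - -M)/N) * ∫ m in Ioo (0:ℝ) 1, |W m| := this
        _ = ((M - -M) * ∫ m in Ioo (0:ℝ) 1, |W m|) / N := by ring
    exact abs_eq_zero.1 (le_antisymm hle (abs_nonneg _))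
  -- step 3 : M → ∞ via dominated convergence
  have hZi := mul_integrable hW.1 hZp
  have hdom : Filter.Tendsto (fun k : ℕ => ∫ m in Ioo (0:ℝ) 1,
      W m * max (-((k:ℝ)+1)) (min (Z m) ((k:ℝ)+1))) Filter.atTop
      (nhds (∫ m in Ioo (0:ℝ) 1, W m * Z m)) := by
    refine tendsto_integral_of_dominated_convergence (fun m => |W m * Z m|) ?_ hZi.abs ?_ ?_
    · intro k
      exact (hW.1.aestronglyMeasurable.mul
        (Continuous.comp_aestronglyMeasurable
          (g := fun v : ℝ => max (-((k:ℝ)+1)) (min v ((k:ℝ)+1))) (f := Z)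
          (continuous_const.max (continuous_id'.min continuous_const)) hZp.1))
    · intro k
      refine Filter.Eventually.of_forall fun m => ?_
      show ‖W m * max (-((k:ℝ)+1)) (min (Z m) ((k:ℝ)+1))‖ ≤ |W m * Z m|
      rw [Real.norm_eq_abs, abs_mul, abs_mul]
      refine mul_le_mul_of_nonneg_left ?_ (abs_nonneg _)
      rw [abs_le]
      rcases le_total (Z m) (-((k:ℝ)+1)) with h | h
      · rw [min_eq_left (by linarith), max_eq_left (by linarith)]
        constructor <;> [linarith [neg_abs_le (Z m)]; linarith [le_abs_self (Z m), abs_nonneg (Z m)]]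
      rcases le_total ((k:ℝ)+1) (Z m) with h2 | h2
      · rw [min_eq_right h2, max_eq_right (by linarith)]
        constructor <;> [linarith [abs_nonneg (Z m)]; linarith [le_abs_self (Z m)]]
      · rw [min_eq_left h2, max_eq_right h]
        constructor <;> [linarith [neg_abs_le (Z m)]; linarith [le_abs_self (Z m)]]
    · refine Filter.Eventually.of_forall fun m => ?_
      refine Filter.Tendsto.congr' ?_ tendsto_const_nhds
      rw [Filter.EventuallyEq, Filter.eventually_atTop]
      refine ⟨⌈|Z m|⌉₊, fun k hk => ?_⟩
      have hk1 : |Z m| ≤ (k:ℝ) + 1 := by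
        calc |Z m| ≤ (⌈|Z m|⌉₊ : ℝ) := Nat.le_ceil _
          _ ≤ (k:ℝ) := by exact_mod_cast hk
          _ ≤ (k:ℝ) + 1 := by linarith
      have h1 := abs_le.1 hk1
      have h2 : W m * max (-((k:ℝ)+1)) (min (Z m) ((k:ℝ)+1)) = W m * Z m := by
        rw [min_eq_left h1.2, max_eq_right h1.1]
      exact h2.symm
  have hconst : Filter.Tendsto (fun _ : ℕ => (0:ℝ)) Filter.atTop
      (nhds (∫ m in Ioo (0:ℝ) 1, W m * Z m)) := by
    refine hdom.congr fun k => ?_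
    exact htrunc ((k:ℝ)+1) (by positivity)
  exact (tendsto_nhds_unique hconst tendsto_const_nhds)

end

end
end Stmt5Aux

/-- Monotonicity of normal cones: if `Ω_{X₁} ⊆ Ω_{X₂}` then `N_{X₁} K ⊆ N_{X₂} K`. -/
theorem stmt_5 (X₁ X₂ : ℝ → ℝ)
    (h₁ : MonotoneOn X₁ (Ioo (0:ℝ) 1)) (h₂ : MonotoneOn X₂ (Ioo (0:ℝ) 1))
    (hm₁ : MemLp X₁ 2 (volume.restrict (Ioo (0:ℝ) 1)))
    (hm₂ : MemLp X₂ 2 (volume.restrict (Ioo (0:ℝ) 1)))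
    (hΩ : locallyConstantSet X₁ ⊆ locallyConstantSet X₂) :
    normalCone X₁ ⊆ normalCone X₂ := by
  intro W hW
  refine ⟨hW.1, fun Y hY hYp => ?_⟩
  have hWX₁ : (∫ m in Ioo (0:ℝ) 1, W m * X₁ m) = 0 :=
    Stmt5Aux.pairing_zero hW h₁ hm₁ h₁ hm₁ (subset_refl _)
  have hWX₂ : (∫ m in Ioo (0:ℝ) 1, W m * X₂ m) = 0 :=
    Stmt5Aux.pairing_zero hW h₁ hm₁ h₂ hm₂ hΩ
  have hWY := Stmt5Aux.mul_integrable hW.1 hYp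
  have hW1 := Stmt5Aux.mul_integrable hW.1 hm₁
  have hW2 := Stmt5Aux.mul_integrable hW.1 hm₂
  have e1 : ∀ m : ℝ, W m * (Y m - X₁ m) = W m * Y m - W m * X₁ m := fun m => by ring
  have e2 : ∀ m : ℝ, W m * (Y m - X₂ m) = W m * Y m - W m * X₂ m := fun m => by ring
  have h := hW.2 Y hY hYp
  rw [show (∫ m in Ioo (0:ℝ) 1, W m * (Y m - X₁ m))
      = (∫ m in Ioo (0:ℝ) 1, W m * Y m) - ∫ m in Ioo (0:ℝ) 1, W m * X₁ m from by
    simp only [e1]; exact integral_sub hWY hW1, hWX₁, sub_zero] at h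
  rw [show (∫ m in Ioo (0:ℝ) 1, W m * (Y m - X₂ m))
      = (∫ m in Ioo (0:ℝ) 1, W m * Y m) - ∫ m in Ioo (0:ℝ) 1, W m * X₂ m from by
    simp only [e2]; exact integral_sub hWY hW2, hWX₂, sub_zero]
  exact h
end

section
/- Let X ∈ L²(0,1) be nondecreasing and right-continuous, let M be its right-continuous generalized inverse (a probability distribution function on ℝ), let W ∈ L²(0,1) with primitive 𝒲(m) = ∫₀^m W. Let 𝒲'_M denote the Radon–Nikodym derivative of ∂_x(𝒲∘M) with respect to ∂_x M (given by the generalized chain rule). Then (Proj_{H_X} W)(m) = 𝒲'_M(X(m)) for a.e. m ∈ (0,1), where Proj_{H_X} is the L²-projection onto the subspace of functions constant on each maximal interval where X is constant. -/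
open MeasureTheory Set
open scoped ENNReal

/-- `(a,b)` is a maximal open interval of the locally-constant set of `X`. -/
def IsMaxInterval (X : ℝ → ℝ) (a b : ℝ) : Prop :=
  a < b ∧ Ioo a b ⊆ locallyConstantSet X ∧
    a ∉ locallyConstantSet X ∧ b ∉ locallyConstantSet X

namespace Stmt7Aux

variable {X : ℝ → ℝ} {m : ℝ}

lemma fib_bddBelow (x : ℝ) : BddBelow (X ⁻¹' {x} ∩ Ioo (0:ℝ) 1) :=
  ⟨0, fun t ht => ht.2.1.le⟩

lemma fib_bddAbove (x : ℝ) : BddAbove (X ⁻¹' {x} ∩ Ioo (0:ℝ) 1) :=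
  ⟨1, fun t ht => ht.2.2.le⟩

lemma Ioo_subset_fib (hX : MonotoneOn X (Ioo (0:ℝ) 1)) (hm : m ∈ Ioo (0:ℝ) 1) :
    Ioo (sInf (X ⁻¹' {X m} ∩ Ioo (0:ℝ) 1)) (sSup (X ⁻¹' {X m} ∩ Ioo (0:ℝ) 1)) ⊆
      X ⁻¹' {X m} ∩ Ioo (0:ℝ) 1 := by
  intro t ht
  have hmF : m ∈ X ⁻¹' {X m} ∩ Ioo (0:ℝ) 1 := ⟨rfl, hm⟩
  obtain ⟨u, hu, hut⟩ := exists_lt_of_csInf_lt ⟨m, hmF⟩ ht.1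
  obtain ⟨v, hv, htv⟩ := exists_lt_of_lt_csSup ⟨m, hmF⟩ ht.2
  have htI : t ∈ Ioo (0:ℝ) 1 := ⟨hu.2.1.trans hut, htv.trans hv.2.2⟩
  refine ⟨?_, htI⟩
  have h1 : X u ≤ X t := hX hu.2 htI hut.le
  have h2 : X t ≤ X v := hX htI hv.2 htv.le
  have hXu : X u = X m := hu.1
  have hXv : X v = X m := hv.1
  have : X t = X m := le_antisymm (hXv ▸ h2) (hXu ▸ h1)
  exact this

lemma Ioo_fib_subset_lcs (hX : MonotoneOn X (Ioo (0:ℝ) 1)) (hm : m ∈ Ioo (0:ℝ) 1) :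
    Ioo (sInf (X ⁻¹' {X m} ∩ Ioo (0:ℝ) 1)) (sSup (X ⁻¹' {X m} ∩ Ioo (0:ℝ) 1)) ⊆
      locallyConstantSet X := by
  set F := X ⁻¹' {X m} ∩ Ioo (0:ℝ) 1 with hF
  intro t ht
  have htF := Ioo_subset_fib hX hm ht
  have h1 : 0 < t - sInf F := sub_pos.mpr ht.1
  have h2 : 0 < sSup F - t := sub_pos.mpr ht.2
  refine ⟨htF.2, min (t - sInf F) (sSup F - t), lt_min h1 h2, ?_⟩
  have key : ∀ y ∈ Metric.ball t (min (t - sInf F) (sSup F - t)), X y = X m := by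
    intro y hy
    rw [Real.ball_eq_Ioo] at hy
    have k1 := min_le_left (t - sInf F) (sSup F - t)
    have k2 := min_le_right (t - sInf F) (sSup F - t)
    have hyI : y ∈ Ioo (sInf F) (sSup F) :=
      ⟨by linarith [hy.1], by linarith [hy.2]⟩
    exact (Ioo_subset_fib hX hm hyI).1
  intro y hy z hz
  rw [key y hy, key z hz]

lemma sInf_fib_not_mem (hX : MonotoneOn X (Ioo (0:ℝ) 1)) (hm : m ∈ Ioo (0:ℝ) 1) :
    sInf (X ⁻¹' {X m} ∩ Ioo (0:ℝ) 1) ∉ locallyConstantSet X := by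
  rintro ⟨haI, ε, hε, hconst⟩
  have hne : (X ⁻¹' {X m} ∩ Ioo (0:ℝ) 1).Nonempty := ⟨m, ⟨rfl, hm⟩⟩
  set a := sInf (X ⁻¹' {X m} ∩ Ioo (0:ℝ) 1) with ha
  obtain ⟨u, hu, huε⟩ := exists_lt_of_csInf_lt hne
    (ha ▸ lt_add_of_pos_right a hε)
  have hau : a ≤ u := ha ▸ csInf_le (fib_bddBelow _) hu
  set δ := min ε a / 2 with hδ
  have hδ1 : δ ≤ ε / 2 := by
    have := min_le_left ε a; simp only [hδ]; linarith
  have hδ2 : δ ≤ a / 2 := by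
    have := min_le_right ε a; simp only [hδ]; linarith
  have hδpos : 0 < δ := by
    have h0a : 0 < a := haI.1
    have : 0 < min ε a := lt_min hε h0a
    simp only [hδ]; linarith
  have h1 : a - δ ∈ Metric.ball a ε := by
    rw [Real.ball_eq_Ioo]; constructor <;> linarith
  have h2 : u ∈ Metric.ball a ε := by
    rw [Real.ball_eq_Ioo]; exact ⟨by linarith, huε⟩
  have h3 : X (a - δ) = X m := (hconst _ h1 _ h2).trans hu.1
  have h4 : a - δ ∈ X ⁻¹' {X m} ∩ Ioo (0:ℝ) 1 := by
    refine ⟨h3, ⟨?_, ?_⟩⟩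
    · have h0a : 0 < a := haI.1; linarith
    · have h1a : a < 1 := haI.2; linarith
  have : a ≤ a - δ := ha ▸ csInf_le (fib_bddBelow _) h4
  linarith

lemma sSup_fib_not_mem (hX : MonotoneOn X (Ioo (0:ℝ) 1)) (hm : m ∈ Ioo (0:ℝ) 1) :
    sSup (X ⁻¹' {X m} ∩ Ioo (0:ℝ) 1) ∉ locallyConstantSet X := by
  rintro ⟨hbI, ε, hε, hconst⟩
  have hne : (X ⁻¹' {X m} ∩ Ioo (0:ℝ) 1).Nonempty := ⟨m, ⟨rfl, hm⟩⟩
  set b := sSup (X ⁻¹' {X m} ∩ Ioo (0:ℝ) 1) with hb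
  obtain ⟨u, hu, huε⟩ := exists_lt_of_lt_csSup hne
    (hb ▸ (by linarith : b - ε < b))
  have hub : u ≤ b := hb ▸ le_csSup (fib_bddAbove _) hu
  set δ := min ε (1 - b) / 2 with hδ
  have hδ1 : δ ≤ ε / 2 := by
    have := min_le_left ε (1 - b); simp only [hδ]; linarith
  have hδ2 : δ ≤ (1 - b) / 2 := by
    have := min_le_right ε (1 - b); simp only [hδ]; linarith
  have hδpos : 0 < δ := by
    have h1b : b < 1 := hbI.2
    have : 0 < min ε (1 - b) := lt_min hε (by linarith)
    simp only [hδ]; linarith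
  have h1 : b + δ ∈ Metric.ball b ε := by
    rw [Real.ball_eq_Ioo]; constructor <;> linarith
  have h2 : u ∈ Metric.ball b ε := by
    rw [Real.ball_eq_Ioo]; exact ⟨huε, by linarith⟩
  have h3 : X (b + δ) = X m := (hconst _ h1 _ h2).trans hu.1
  have h4 : b + δ ∈ X ⁻¹' {X m} ∩ Ioo (0:ℝ) 1 := by
    refine ⟨h3, ⟨?_, ?_⟩⟩
    · have h0b : 0 < b := hbI.1; linarith
    · linarith
  have : b + δ ≤ b := hb ▸ le_csSup (fib_bddAbove _) h4
  linarith

lemma lcs_between (hm' : m ∈ locallyConstantSet X) :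
    sInf (X ⁻¹' {X m} ∩ Ioo (0:ℝ) 1) < m ∧ m < sSup (X ⁻¹' {X m} ∩ Ioo (0:ℝ) 1) := by
  obtain ⟨hmI, ε, hε, hconst⟩ := hm'
  set δ := min ε (min m (1 - m)) / 2 with hδ
  have k1 := min_le_left ε (min m (1 - m))
  have k2 := (min_le_right ε (min m (1 - m))).trans (min_le_left m (1 - m))
  have k3 := (min_le_right ε (min m (1 - m))).trans (min_le_right m (1 - m))
  have hδpos : 0 < δ := by
    have : 0 < min ε (min m (1 - m)) :=
      lt_min hε (lt_min hmI.1 (by linarith [hmI.2]))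
    simp only [hδ]; linarith
  have hself : m ∈ Metric.ball m ε := Metric.mem_ball_self hε
  have hmem : ∀ y, y ∈ Metric.ball m ε → X y = X m := fun y hy => hconst _ hy _ hself
  have hm1 : m - δ ∈ X ⁻¹' {X m} ∩ Ioo (0:ℝ) 1 := by
    refine ⟨hmem _ ?_, ⟨by linarith [hmI.1], by linarith [hmI.2]⟩⟩
    rw [Real.ball_eq_Ioo]; constructor <;> linarith
  have hm2 : m + δ ∈ X ⁻¹' {X m} ∩ Ioo (0:ℝ) 1 := by
    refine ⟨hmem _ ?_, ⟨by linarith [hmI.1], by linarith [hmI.2]⟩⟩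
    rw [Real.ball_eq_Ioo]; constructor <;> linarith
  constructor
  · exact lt_of_le_of_lt (csInf_le (fib_bddBelow _) hm1) (by linarith)
  · exact lt_of_lt_of_le (by linarith) (le_csSup (fib_bddAbove _) hm2)

end Stmt7Aux

open Stmt7Aux

/-- Projection on `H_X` and the Radon–Nikodym derivative (Lemma 5.1): for `X` nondecreasing
and right-continuous with generalized inverse `M`, `W ∈ L²(0,1)` with primitive `𝒲`, the
`L²`-projection of `W` onto `H_X` satisfies `(Proj_{H_X} W)(m) = 𝒲'_M(X(m))` a.e., where
`𝒲'_M` is the Radon–Nikodym derivative of `∂ₓ(𝒲 ∘ M)` with respect to `∂ₓ M` given by the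
generalized chain rule. -/
theorem stmt_7 (X W 𝒲 P : ℝ → ℝ)
    (hX : MonotoneOn X (Ioo (0:ℝ) 1))
    (hXrc : ∀ m ∈ Ioo (0:ℝ) 1, ContinuousWithinAt X (Ici m) m)
    (hXm : MemLp X 2 (volume.restrict (Ioo (0:ℝ) 1)))
    (hW : MemLp W 2 (volume.restrict (Ioo (0:ℝ) 1)))
    (h𝒲 : ∀ m, 𝒲 m = ∫ ω in Ioo (0:ℝ) m, W ω)
    (μ : Measure ℝ) (hμ : μ = Measure.map X (volume.restrict (Ioo (0:ℝ) 1)))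
    (M Mleft g : ℝ → ℝ)
    (hM : ∀ x, M x = (μ (Iic x)).toReal)
    (hMleft : ∀ x, Mleft x = (μ (Iio x)).toReal)
    (hg : ∀ x, g x = if μ {x} = 0 then W (M x)
      else (𝒲 (M x) - 𝒲 (Mleft x)) / (μ {x}).toReal)
    (hP1 : ∀ m ∈ Ioo (0:ℝ) 1 \ locallyConstantSet X, P m = W m)
    (hP2 : ∀ a b, IsMaxInterval X a b → ∀ m ∈ Ioo a b,
      P m = (b - a)⁻¹ * ∫ ω in Ioo a b, W ω) :
    ∀ᵐ m ∂(volume.restrict (Ioo (0:ℝ) 1)), P m = g (X m) := by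
  have hXae : AEMeasurable X (volume.restrict (Ioo (0:ℝ) 1)) :=
    aemeasurable_restrict_of_monotoneOn measurableSet_Ioo hX
  -- μ of a measurable set
  have hμs : ∀ s : Set ℝ, MeasurableSet s → μ s = volume (X ⁻¹' s ∩ Ioo (0:ℝ) 1) := by
    intro s hs
    rw [hμ, Measure.map_apply_of_aemeasurable hXae hs,
      Measure.restrict_apply' measurableSet_Ioo]
  haveI hfinμ : IsFiniteMeasure μ := by
    constructor
    rw [hμs _ MeasurableSet.univ]
    exact lt_of_le_of_lt (measure_mono (inter_subset_right))
      (by simp [Real.volume_Ioo])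
  -- integrability of W
  haveI : IsFiniteMeasure (volume.restrict (Ioo (0:ℝ) 1)) := by
    constructor
    rw [Measure.restrict_apply_univ]
    simp [Real.volume_Ioo]
  have hWi : IntegrableOn W (Ioo (0:ℝ) 1) volume := hW.integrable one_le_two
  -- the exceptional set
  set N : Set ℝ := {m | m ∈ Ioo (0:ℝ) 1 ∧ m ∉ locallyConstantSet X ∧ μ {X m} ≠ 0}
    with hN
  -- countability of N
  have hNc : N.Countable := by
    have hatoms : Set.Countable {x : ℝ | 0 < μ {x}} := by
      have := MeasureTheory.Measure.countable_meas_pos_of_disjoint_iUnion₀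
        (μ := μ) (As := fun x : ℝ => {x})
        (fun x => (measurableSet_singleton x).nullMeasurableSet)
        (fun i j hij => (disjoint_singleton.mpr hij).aedisjoint)
      exact this
    have hsub : N ⊆ ⋃ x ∈ {x : ℝ | 0 < μ {x}},
        {sInf (X ⁻¹' {x} ∩ Ioo (0:ℝ) 1), sSup (X ⁻¹' {x} ∩ Ioo (0:ℝ) 1)} := by
      rintro m ⟨hmI, hml, hmμ⟩
      have hxA : X m ∈ {x : ℝ | 0 < μ {x}} := pos_iff_ne_zero.mpr hmμ
      have hmF : m ∈ X ⁻¹' {X m} ∩ Ioo (0:ℝ) 1 := ⟨rfl, hmI⟩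
      have hIcc : m ∈ Icc (sInf (X ⁻¹' {X m} ∩ Ioo (0:ℝ) 1))
          (sSup (X ⁻¹' {X m} ∩ Ioo (0:ℝ) 1)) :=
        ⟨csInf_le (fib_bddBelow _) hmF, le_csSup (fib_bddAbove _) hmF⟩
      have : m = sInf (X ⁻¹' {X m} ∩ Ioo (0:ℝ) 1) ∨
          m = sSup (X ⁻¹' {X m} ∩ Ioo (0:ℝ) 1) := by
        by_contra hcon
        push_neg at hcon
        have hmio : m ∈ Ioo (sInf (X ⁻¹' {X m} ∩ Ioo (0:ℝ) 1))
            (sSup (X ⁻¹' {X m} ∩ Ioo (0:ℝ) 1)) :=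
          ⟨lt_of_le_of_ne hIcc.1 (Ne.symm hcon.1), lt_of_le_of_ne hIcc.2 hcon.2⟩
        exact hml (Ioo_fib_subset_lcs hX hmI hmio)
      refine mem_biUnion hxA ?_
      rcases this with h | h
      · exact mem_insert_iff.mpr (Or.inl h)
      · exact mem_insert_iff.mpr (Or.inr (mem_singleton_iff.mpr h))
    exact (hatoms.biUnion fun x _ =>
      ((Set.finite_singleton _).insert _).countable).mono hsub
  have hN0 : volume N = 0 := hNc.measure_zero _
  rw [ae_restrict_iff' measurableSet_Ioo]
  have hNae : ∀ᵐ m ∂(volume : Measure ℝ), m ∉ N :=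
    measure_eq_zero_iff_ae_notMem.mp hN0
  filter_upwards [hNae] with m hmN hmI
  by_cases hlc : m ∈ locallyConstantSet X
  · -- Case A : m in a maximal constancy interval
    set F := X ⁻¹' {X m} ∩ Ioo (0:ℝ) 1 with hF
    set a := sInf F with ha
    set b := sSup F with hb
    have hmF : m ∈ F := ⟨rfl, hmI⟩
    have hab : a < m ∧ m < b := lcs_between hlc
    have ha0 : 0 ≤ a := le_csInf ⟨m, hmF⟩ fun t ht => ht.2.1.le
    have hb1 : b ≤ 1 := csSup_le ⟨m, hmF⟩ fun t ht => ht.2.2.le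
    have ham : a ≤ m := hab.1.le
    have hmb : m ≤ b := hab.2.le
    have haltb : a < b := hab.1.trans hab.2
    have hFsub : F ⊆ Icc a b := fun t ht =>
      ⟨csInf_le (fib_bddBelow _) ht, le_csSup (fib_bddAbove _) ht⟩
    have hIooF : Ioo a b ⊆ F := Ioo_subset_fib hX hmI
    have hmax : IsMaxInterval X a b :=
      ⟨haltb, Ioo_fib_subset_lcs hX hmI, sInf_fib_not_mem hX hmI,
        sSup_fib_not_mem hX hmI⟩
    -- μ {X m} = ofReal (b - a)
    have hμatom : μ {X m} = ENNReal.ofReal (b - a) := by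
      rw [hμs _ (measurableSet_singleton _)]
      refine le_antisymm ?_ ?_
      · calc volume (X ⁻¹' {X m} ∩ Ioo (0:ℝ) 1) ≤ volume (Icc a b) :=
              measure_mono hFsub
          _ = ENNReal.ofReal (b - a) := Real.volume_Icc
      · calc ENNReal.ofReal (b - a) = volume (Ioo a b) := Real.volume_Ioo.symm
          _ ≤ _ := measure_mono hIooF
    -- μ (Iio (X m)) = ofReal a
    have hμIio : μ (Iio (X m)) = ENNReal.ofReal a := by
      rw [hμs _ measurableSet_Iio]
      have hsub1 : Ioo (0:ℝ) a ⊆ X ⁻¹' Iio (X m) ∩ Ioo (0:ℝ) 1 := by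
        intro t ht
        have htI : t ∈ Ioo (0:ℝ) 1 := ⟨ht.1, ht.2.trans_le (ham.trans hmI.2.le)⟩
        have hle : X t ≤ X m := hX htI hmI (ht.2.trans hab.1).le
        have hne : X t ≠ X m := by
          intro heq
          have : t ∈ F := ⟨heq, htI⟩
          exact absurd (csInf_le (fib_bddBelow _) this) (not_le.mpr ht.2)
        exact ⟨lt_of_le_of_ne hle hne, htI⟩
      have hsub2 : X ⁻¹' Iio (X m) ∩ Ioo (0:ℝ) 1 ⊆ Ioc 0 a := by
        rintro t ⟨htx, htI⟩
        refine ⟨htI.1, ?_⟩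
        by_contra hcon
        push_neg at hcon
        rcases lt_or_ge t b with h | h
        · have : t ∈ F := hIooF ⟨hcon, h⟩
          exact absurd this.1 (ne_of_lt htx)
        · have : X m ≤ X t := hX hmI htI (hmb.trans h)
          exact absurd htx (not_lt.mpr this)
      refine le_antisymm ?_ ?_
      · calc volume (X ⁻¹' Iio (X m) ∩ Ioo (0:ℝ) 1) ≤ volume (Ioc (0:ℝ) a) :=
              measure_mono hsub2
          _ = ENNReal.ofReal (a - 0) := Real.volume_Ioc
          _ = ENNReal.ofReal a := by rw [sub_zero]
      · calc ENNReal.ofReal a = volume (Ioo (0:ℝ) a) := by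
              rw [Real.volume_Ioo, sub_zero]
          _ ≤ _ := measure_mono hsub1
    -- μ (Iic (X m)) = ofReal b
    have hμIic : μ (Iic (X m)) = ENNReal.ofReal b := by
      rw [hμs _ measurableSet_Iic]
      have hsub1 : Ioo (0:ℝ) b ⊆ X ⁻¹' Iic (X m) ∩ Ioo (0:ℝ) 1 := by
        intro t ht
        have htI : t ∈ Ioo (0:ℝ) 1 := ⟨ht.1, ht.2.trans_le hb1⟩
        rcases le_or_gt t m with h | h
        · exact ⟨hX htI hmI h, htI⟩
        · have : t ∈ F := hIooF ⟨hab.1.trans h, ht.2⟩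
          exact ⟨this.1.le, htI⟩
      have hsub2 : X ⁻¹' Iic (X m) ∩ Ioo (0:ℝ) 1 ⊆ Ioc 0 b := by
        rintro t ⟨htx, htI⟩
        refine ⟨htI.1, ?_⟩
        by_contra hcon
        push_neg at hcon
        have hxt : X m ≤ X t := hX hmI htI (hmb.trans hcon.le)
        have : t ∈ F := ⟨le_antisymm htx hxt, htI⟩
        exact absurd (le_csSup (fib_bddAbove _) this) (not_le.mpr hcon)
      refine le_antisymm ?_ ?_
      · calc volume (X ⁻¹' Iic (X m) ∩ Ioo (0:ℝ) 1) ≤ volume (Ioc (0:ℝ) b) :=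
              measure_mono hsub2
          _ = ENNReal.ofReal (b - 0) := Real.volume_Ioc
          _ = ENNReal.ofReal b := by rw [sub_zero]
      · calc ENNReal.ofReal b = volume (Ioo (0:ℝ) b) := by
              rw [Real.volume_Ioo, sub_zero]
          _ ≤ _ := measure_mono hsub1
    have hMb : M (X m) = b := by
      rw [hM, hμIic, ENNReal.toReal_ofReal (ha0.trans haltb.le)]
    have hMla : Mleft (X m) = a := by
      rw [hMleft, hμIio, ENNReal.toReal_ofReal ha0]
    have hatne : μ {X m} ≠ 0 := by
      rw [hμatom]
      simp only [ne_eq, ENNReal.ofReal_eq_zero, not_le]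
      linarith
    -- interval integrability
    have hint : ∀ c d : ℝ, 0 ≤ c → c ≤ d → d ≤ 1 → IntervalIntegrable W volume c d := by
      intro c d hc hcd hd1
      rw [intervalIntegrable_iff_integrableOn_Ioo_of_le hcd]
      exact hWi.mono_set (Ioo_subset_Ioo hc hd1)
    have key : 𝒲 b - 𝒲 a = ∫ ω in Ioo a b, W ω := by
      have e1 : 𝒲 a = ∫ ω in (0:ℝ)..a, W ω := by
        rw [h𝒲, intervalIntegral.integral_of_le ha0, integral_Ioc_eq_integral_Ioo]
      have e2 : 𝒲 b = ∫ ω in (0:ℝ)..b, W ω := by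
        rw [h𝒲, intervalIntegral.integral_of_le (ha0.trans haltb.le),
          integral_Ioc_eq_integral_Ioo]
      have e3 : (∫ ω in (0:ℝ)..a, W ω) + ∫ ω in a..b, W ω = ∫ ω in (0:ℝ)..b, W ω :=
        intervalIntegral.integral_add_adjacent_intervals
          (hint 0 a le_rfl ha0 (ham.trans hmI.2.le))
          (hint a b ha0 haltb.le hb1)
      have e4 : (∫ ω in a..b, W ω) = ∫ ω in Ioo a b, W ω := by
        rw [intervalIntegral.integral_of_le haltb.le, integral_Ioc_eq_integral_Ioo]
      rw [e1, e2, ← e3, e4]; ring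
    rw [hP2 a b hmax m hab, hg, if_neg hatne, hMb, hMla, key, hμatom,
      ENNReal.toReal_ofReal (by linarith : (0:ℝ) ≤ b - a), div_eq_inv_mul]
  · -- Case B : m not locally constant, no atom (since m ∉ N)
    have hatom : μ {X m} = 0 := by
      by_contra hcon
      exact hmN ⟨hmI, hlc, hcon⟩
    have hvolF : volume (X ⁻¹' {X m} ∩ Ioo (0:ℝ) 1) = 0 := by
      rw [← hμs _ (measurableSet_singleton _)]; exact hatom
    have hμIic : μ (Iic (X m)) = ENNReal.ofReal m := by
      rw [hμs _ measurableSet_Iic]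
      have hsub1 : Ioc (0:ℝ) m ⊆ X ⁻¹' Iic (X m) ∩ Ioo (0:ℝ) 1 := by
        intro t ht
        have htI : t ∈ Ioo (0:ℝ) 1 := ⟨ht.1, ht.2.trans_lt hmI.2⟩
        exact ⟨hX htI hmI ht.2, htI⟩
      have hsub2 : X ⁻¹' Iic (X m) ∩ Ioo (0:ℝ) 1 ⊆
          Ioc (0:ℝ) m ∪ (X ⁻¹' {X m} ∩ Ioo (0:ℝ) 1) := by
        rintro t ⟨htx, htI⟩
        rcases le_or_gt t m with h | h
        · exact Or.inl ⟨htI.1, h⟩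
        · exact Or.inr ⟨le_antisymm htx (hX hmI htI h.le), htI⟩
      refine le_antisymm ?_ ?_
      · calc volume (X ⁻¹' Iic (X m) ∩ Ioo (0:ℝ) 1)
            ≤ volume (Ioc (0:ℝ) m ∪ (X ⁻¹' {X m} ∩ Ioo (0:ℝ) 1)) :=
              measure_mono hsub2
          _ ≤ volume (Ioc (0:ℝ) m) + volume (X ⁻¹' {X m} ∩ Ioo (0:ℝ) 1) :=
              measure_union_le _ _
          _ = ENNReal.ofReal m := by
              rw [hvolF, add_zero, Real.volume_Ioc, sub_zero]
      · calc ENNReal.ofReal m = volume (Ioc (0:ℝ) m) := by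
              rw [Real.volume_Ioc, sub_zero]
          _ ≤ _ := measure_mono hsub1
    have hMm : M (X m) = m := by
      rw [hM, hμIic, ENNReal.toReal_ofReal hmI.1.le]
    rw [hP1 m ⟨hmI, hlc⟩, hg, if_pos hatom, hMm]
end

section
/- For t ≥ 1 define X(t,m) = (m − 1/2)(t − 1/|2m−1|)² for |m − 1/2| ≥ 1/(2t) and X(t,m) = 0 for |m − 1/2| < 1/(2t), with velocity V(t,m) = ∂⁺_t X(t,m). Then the kinetic and potential energies balance exactly: ∫₀¹ V(t,m)² dm = ∫₀¹∫₀¹ |X(t,m) − X(t,ω)| dm dω = (t−1)³/(3t) for all t ≥ 1. -/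
set_option maxHeartbeats 1000000

open MeasureTheory Set

namespace EP15

noncomputable def g (t m : ℝ) : ℝ :=
  if 1 / (2 * t) ≤ |m - 1 / 2| then (m - 1 / 2) * (t - 1 / |2 * m - 1|) ^ 2 else 0

noncomputable def h (t m : ℝ) : ℝ := (max (|2 * m - 1| * t - 1) 0) ^ 2

lemma abs2 (m : ℝ) : |2 * m - 1| = 2 * |m - 1 / 2| := by
  rw [show (2 * m - 1 : ℝ) = 2 * (m - 1 / 2) by ring, abs_mul, abs_two]

lemma g_reflect (t m : ℝ) : g t (1 - m) = - g t m := by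
  unfold g
  rw [show (1 - m - 1 / 2 : ℝ) = -(m - 1 / 2) by ring, abs_neg,
      show (2 * (1 - m) - 1 : ℝ) = -(2 * m - 1) by ring, abs_neg]
  split <;> [skip; simp]
  ring

lemma g_nonneg {t : ℝ} (ht : 1 ≤ t) {b : ℝ} (hb : 1 / 2 - 1 / (2 * t) ≤ b) :
    0 ≤ g t b := by
  have ht0 : (0:ℝ) < t := lt_of_lt_of_le one_pos ht
  unfold g
  split
  next hc =>
    rcases le_or_gt (1/2 : ℝ) b with hb2 | hb2
    · exact mul_nonneg (by linarith) (sq_nonneg _)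
    · -- forced boundary: |b - 1/2| = 1/2 - b ≤ 1/(2t) and ≥ 1/(2t)
      have habs : |b - 1/2| = 1/2 - b := by rw [abs_of_neg (by linarith)]; ring
      rw [habs] at hc
      have heq : (1:ℝ)/2 - b = 1/(2*t) := le_antisymm (by linarith) hc
      have h2 : |2 * b - 1| = 1 / t := by
        rw [abs2, habs, heq]; field_simp
      rw [h2, one_div_one_div]
      simp
  next => exact le_rfl

lemma g_nonpos {t : ℝ} (ht : 1 ≤ t) {a : ℝ} (ha : a ≤ 1 / 2 + 1 / (2 * t)) :
    g t a ≤ 0 := by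
  have := g_nonneg ht (b := 1 - a) (by linarith)
  rw [g_reflect] at this; linarith

lemma g_mono_right {t : ℝ} (ht : 1 ≤ t) {a b : ℝ}
    (ha : 1 / 2 + 1 / (2 * t) ≤ a) (hab : a ≤ b) : g t a ≤ g t b := by
  have ht0 : (0:ℝ) < t := lt_of_lt_of_le one_pos ht
  have ha2 : 1 / (2 * t) ≤ a - 1/2 := by linarith
  have hb2 : 1 / (2 * t) ≤ b - 1/2 := by linarith
  have hpos : (0:ℝ) < 1 / (2*t) := by positivity
  have haabs : |a - 1/2| = a - 1/2 := abs_of_nonneg (by linarith)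
  have hbabs : |b - 1/2| = b - 1/2 := abs_of_nonneg (by linarith)
  have ha2' : 1 ≤ (a - 1/2) * (2 * t) := (div_le_iff₀ (by positivity)).mp ha2
  have hb2' : 1 ≤ (b - 1/2) * (2 * t) := (div_le_iff₀ (by positivity)).mp hb2
  have ha1 : 1 / t ≤ 2 * a - 1 := (div_le_iff₀ ht0).mpr (by nlinarith)
  have hb1 : 1 / t ≤ 2 * b - 1 := (div_le_iff₀ ht0).mpr (by nlinarith)
  have ha0 : (0:ℝ) < 2 * a - 1 := lt_of_lt_of_le (by positivity) ha1
  have hb0 : (0:ℝ) < 2 * b - 1 := lt_of_lt_of_le (by positivity) hb1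
  have haabs2 : |2 * a - 1| = 2 * a - 1 := abs_of_pos ha0
  have hbabs2 : |2 * b - 1| = 2 * b - 1 := abs_of_pos hb0
  have ha1' : 1 ≤ (2 * a - 1) * t := (div_le_iff₀ ht0).mp ha1
  have hinva : 1 / (2 * a - 1) ≤ t := (div_le_iff₀ ha0).mpr (by nlinarith)
  have hinv : 1 / (2 * b - 1) ≤ 1 / (2 * a - 1) :=
    one_div_le_one_div_of_le ha0 (by linarith)
  unfold g
  rw [if_pos (by rw [haabs]; exact ha2), if_pos (by rw [hbabs]; exact hb2),
      haabs2, hbabs2]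
  have h1 : (0:ℝ) ≤ t - 1 / (2 * a - 1) := by linarith
  apply mul_le_mul (by linarith) (pow_le_pow_left₀ h1 (by linarith) 2) (by positivity) (by linarith)

lemma g_mono {t : ℝ} (ht : 1 ≤ t) : Monotone (g t) := by
  intro a b hab
  rcases le_or_gt b (1/2 - 1/(2*t)) with hb | hb
  · have := g_mono_right ht (a := 1 - b) (b := 1 - a) (by linarith) (by linarith)
    rw [g_reflect, g_reflect] at this; linarith
  · rcases le_or_gt (1/2 + 1/(2*t)) a with ha | ha
    · exact g_mono_right ht ha hab
    · exact le_trans (g_nonpos ht ha.le) (g_nonneg ht hb.le)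

lemma g_eq_max {t : ℝ} (ht : 1 ≤ t) (m : ℝ) :
    g t m = (m - 1/2) * (max (t - 1 / |2 * m - 1|) 0) ^ 2 := by
  have ht0 : (0:ℝ) < t := lt_of_lt_of_le one_pos ht
  unfold g
  split
  next hc =>
    have hm0 : (0:ℝ) < |m - 1/2| := lt_of_lt_of_le (by positivity) hc
    have hA : (0:ℝ) < |2 * m - 1| := by rw [abs2]; linarith
    have hc' : 1 ≤ |m - 1/2| * (2 * t) := (div_le_iff₀ (by positivity)).mp hc
    have h1 : 1 / t ≤ |2 * m - 1| := by
      rw [abs2]; exact (div_le_iff₀ ht0).mpr (by nlinarith)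
    have h1' : 1 ≤ |2 * m - 1| * t := (div_le_iff₀ ht0).mp h1
    have h2 : 1 / |2 * m - 1| ≤ t := (div_le_iff₀ hA).mpr (by nlinarith)
    rw [max_eq_left (by linarith)]
  next hc =>
    push_neg at hc
    rcases eq_or_ne m (1/2) with hm | hm
    · rw [hm]; ring
    · have hA : (0:ℝ) < |2 * m - 1| := by
        rw [abs2]; have : |m - 1/2| > 0 := abs_pos.mpr (sub_ne_zero.mpr hm)
        linarith
      have hc' : |m - 1/2| * (2 * t) < 1 := (lt_div_iff₀ (by positivity)).mp hc
      have h1 : |2 * m - 1| < 1 / t := by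
        rw [abs2]; exact (lt_div_iff₀ ht0).mpr (by nlinarith)
      have h1' : |2 * m - 1| * t < 1 := (lt_div_iff₀ ht0).mp h1
      have h2 : t < 1 / |2 * m - 1| := (lt_div_iff₀ hA).mpr (by nlinarith)
      rw [max_eq_right (by linarith)]
      ring

lemma g_cont {t : ℝ} (ht : 1 ≤ t) : Continuous (g t) := by
  have ht0 : (0:ℝ) < t := lt_of_lt_of_le one_pos ht
  rw [continuous_iff_continuousAt]
  intro m
  rcases eq_or_ne m (1/2) with hm | hm
  · -- g = 0 on a neighborhood
    have hball : Metric.ball (1/2 : ℝ) (1/(2*t)) ∈ nhds m := by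
      rw [hm]; exact Metric.ball_mem_nhds _ (by positivity)
    have hev : g t =ᶠ[nhds m] (fun _ => 0) := by
      filter_upwards [hball] with x hx
      rw [Metric.mem_ball, Real.dist_eq] at hx
      exact if_neg (not_le.mpr hx)
    exact (continuousAt_const.congr hev.symm)
  · have hfun : g t = fun x => (x - 1/2) * (max (t - 1 / |2 * x - 1|) 0) ^ 2 :=
      funext (g_eq_max ht)
    rw [hfun]
    have hA : |2 * m - 1| ≠ 0 := by
      simp only [abs_ne_zero]; intro hc; apply hm; linarith [hc]
    have h1 : ContinuousAt (fun x : ℝ => |2 * x - 1|) m :=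
      (continuous_abs.comp (by continuity)).continuousAt
    exact ((continuousAt_id.sub continuousAt_const).mul
      (((continuousAt_const.sub (continuousAt_const.div h1 hA)).max continuousAt_const).pow 2))

lemma h_cont (t : ℝ) : Continuous (h t) := by
  unfold h
  exact (((continuous_abs.comp (by continuity)).mul continuous_const |>.sub
    continuous_const).max continuous_const).pow 2


lemma w_spec {t : ℝ} (ht : 1 ≤ t) (m : ℝ) :
    HasDerivWithinAt (fun s => g s m)
      (if 1 / (2 * t) ≤ |m - 1 / 2| then (m - 1/2) * (2 * (t - 1 / |2 * m - 1|)) else 0)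
      (Ici t) t := by
  have ht0 : (0:ℝ) < t := lt_of_lt_of_le one_pos ht
  split
  next hc =>
    have hm0 : (0:ℝ) < |m - 1/2| := lt_of_lt_of_le (by positivity) hc
    have hA : (0:ℝ) < |2 * m - 1| := by rw [abs2]; linarith
    set c : ℝ := 1 / |2 * m - 1| with hc_def
    have hc0 : 0 < c := by positivity
    have hct : c ≤ t := by
      have hc' : 1 ≤ |m - 1/2| * (2 * t) := (div_le_iff₀ (by positivity)).mp hc
      rw [hc_def]
      refine (div_le_iff₀ hA).mpr ?_
      rw [abs2]; nlinarith
    have key : ∀ s ∈ Ici t, g s m = (m - 1/2) * (s - c) ^ 2 := by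
      intro s hs
      have hs' : t ≤ s := hs
      have hcs : c ≤ s := le_trans hct hs'
      have hs0 : 0 < s := lt_of_lt_of_le ht0 hs'
      have habs2 : |2 * m - 1| = 2 * |m - 1/2| := abs2 m
      have hcond : 1 / (2 * s) ≤ |m - 1/2| := by
        rw [div_le_iff₀ (by positivity)]
        have h1 : 1 ≤ s * |2*m-1| := (div_le_iff₀ hA).mp hcs
        nlinarith
      unfold g
      rw [if_pos (by convert hcond using 2 <;> norm_num)]
    have hF : HasDerivAt (fun s : ℝ => (m - 1/2) * (s - c)^2) ((m - 1/2) * (2 * (t - c))) t := by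
      have h1 : HasDerivAt (fun s : ℝ => (s - c)^2) (2 * (t - c)) t := by
        have := ((hasDerivAt_id t).sub_const c).pow 2
        simpa [Pi.pow_def] using this
      exact h1.const_mul _
    exact (hF.hasDerivWithinAt).congr key (key t self_mem_Ici)
  next hc =>
    push_neg at hc
    rcases eq_or_ne m (1/2) with hm | hm
    · have key : ∀ s, g s m = 0 := by
        intro s; unfold g; rw [hm]; split <;> simp
      exact (hasDerivWithinAt_const t _ 0).congr (fun s _ => key s) (key t)
    · have hm0 : (0:ℝ) < |m - 1/2| := abs_pos.mpr (sub_ne_zero.mpr hm)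
      have hA : (0:ℝ) < |2 * m - 1| := by rw [abs2]; linarith
      have hs0 : t < 1 / |2 * m - 1| := by
        have hc' : |m - 1/2| * (2*t) < 1 := (lt_div_iff₀ (by positivity)).mp hc
        rw [lt_div_iff₀ hA, abs2]; nlinarith
      have hmem : Ico t (1 / |2 * m - 1|) ∈ nhdsWithin t (Ici t) :=
        Ico_mem_nhdsGE_of_mem ⟨le_rfl, hs0⟩
      have hzero : g t m = 0 := by
        unfold g; rw [if_neg (not_le.mpr hc)]
      refine (hasDerivWithinAt_const t _ 0).congr_of_eventuallyEq ?_ hzero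
      filter_upwards [hmem] with s hs
      have hs1 : t ≤ s := hs.1
      have hspos : 0 < s := lt_of_lt_of_le ht0 hs1
      have hs2 : s * |2 * m - 1| < 1 := (lt_div_iff₀ hA).mp hs.2
      have habs2 : |2 * m - 1| = 2 * |m - 1/2| := abs2 m
      unfold g
      rw [if_neg]
      push_neg
      rw [lt_div_iff₀ (by positivity : (0:ℝ) < 2*s)]
      nlinarith

lemma V_eq {t : ℝ} (ht : 1 ≤ t) (m : ℝ) :
    derivWithin (fun s => g s m) (Ici t) t =
      (if 1 / (2 * t) ≤ |m - 1 / 2| then (m - 1/2) * (2 * (t - 1 / |2 * m - 1|)) else 0) :=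
  (w_spec ht m).derivWithin (uniqueDiffOn_Ici t t self_mem_Ici)

lemma sq_V_eq_h {t : ℝ} (ht : 1 ≤ t) (m : ℝ) :
    (if 1 / (2 * t) ≤ |m - 1 / 2| then (m - 1/2) * (2 * (t - 1 / |2 * m - 1|)) else 0) ^ 2
      = h t m := by
  have ht0 : (0:ℝ) < t := lt_of_lt_of_le one_pos ht
  unfold h
  split
  next hc =>
    have hm0 : (0:ℝ) < |m - 1/2| := lt_of_lt_of_le (by positivity) hc
    have hA : (0:ℝ) < |2 * m - 1| := by rw [abs2]; linarith
    have hc' : 1 ≤ |m - 1/2| * (2*t) := (div_le_iff₀ (by positivity)).mp hc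
    have h1 : 1 ≤ |2 * m - 1| * t := by rw [abs2]; nlinarith
    rw [max_eq_left (by linarith)]
    have e1 : ((m - 1/2) * (2 * (t - 1/|2*m-1|)))^2 = ((2*m-1) * (t - 1/|2*m-1|))^2 := by ring
    rw [e1, mul_pow, show (2*m-1)^2 = |2*m-1|^2 from (sq_abs _).symm, ← mul_pow]
    congr 1
    field_simp
  next hc =>
    push_neg at hc
    have hc' : |m - 1/2| * (2*t) < 1 := (lt_div_iff₀ (by positivity)).mp hc
    have h1 : |2 * m - 1| * t < 1 := by
      rw [abs2]; nlinarith [abs_nonneg (m - 1/2)]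
    rw [max_eq_right (by linarith)]

lemma two_g_eq_h {t : ℝ} (ht : 1 ≤ t) (m : ℝ) :
    2 * ((2 * m - 1) * g t m) = h t m := by
  have ht0 : (0:ℝ) < t := lt_of_lt_of_le one_pos ht
  unfold g h
  split
  next hc =>
    have hm0 : (0:ℝ) < |m - 1/2| := lt_of_lt_of_le (by positivity) hc
    have hA : (0:ℝ) < |2 * m - 1| := by rw [abs2]; linarith
    have hc' : 1 ≤ |m - 1/2| * (2*t) := (div_le_iff₀ (by positivity)).mp hc
    have h1 : 1 ≤ |2 * m - 1| * t := by rw [abs2]; nlinarith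
    rw [max_eq_left (by linarith)]
    have e1 : 2 * ((2*m-1) * ((m - 1/2) * (t - 1/|2*m-1|)^2)) = ((2*m-1) * (t - 1/|2*m-1|))^2 := by
      ring
    rw [e1, mul_pow, show (2*m-1)^2 = |2*m-1|^2 from (sq_abs _).symm, ← mul_pow]
    congr 1
    field_simp
  next hc =>
    push_neg at hc
    have hc' : |m - 1/2| * (2*t) < 1 := (lt_div_iff₀ (by positivity)).mp hc
    have h1 : |2 * m - 1| * t < 1 := by
      rw [abs2]; nlinarith [abs_nonneg (m - 1/2)]
    rw [max_eq_right (by linarith)]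
    norm_num

lemma integral_h {t : ℝ} (ht : 1 ≤ t) :
    ∫ x in (0:ℝ)..1, h t x = (t-1)^3/(3*t) := by
  have ht0 : (0:ℝ) < t := lt_of_lt_of_le one_pos ht
  have ht0' : t ≠ 0 := ne_of_gt ht0
  set u : ℝ := 1/(2*t) with hu_def
  have hu0 : 0 < u := by positivity
  have hu1 : u * (2*t) = 1 := by rw [hu_def]; field_simp
  have hu2 : u ≤ 1/2 := by nlinarith
  set c1 : ℝ := 1/2 - u with hc1
  set c2 : ℝ := 1/2 + u with hc2
  have hc10 : 0 ≤ c1 := by rw [hc1]; linarith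
  have hc12 : c1 ≤ c2 := by rw [hc1, hc2]; linarith
  have hc21 : c2 ≤ 1 := by rw [hc2]; linarith
  have hint : ∀ a b : ℝ, IntervalIntegrable (h t) volume a b :=
    fun a b => (h_cont t).intervalIntegrable a b
  rw [← intervalIntegral.integral_add_adjacent_intervals (b := c1) (hint 0 c1) (hint c1 1),
      ← intervalIntegral.integral_add_adjacent_intervals (b := c2) (hint c1 c2) (hint c2 1)]
  have I1 : ∫ x in (0:ℝ)..c1, h t x = (t-1)^3/(6*t) := by
    rw [intervalIntegral.integral_congr (g := fun x => ((1-2*x)*t - 1)^2) ?_]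
    · rw [intervalIntegral.integral_eq_sub_of_hasDerivAt
        (f := fun x => -(((1-2*x)*t-1)^3/(6*t))) (f' := fun x => ((1-2*x)*t - 1)^2)
        (fun x _ => ?_) (Continuous.intervalIntegrable (by continuity) _ _)]
      · rw [hc1, hu_def]; field_simp; ring
      · have h1 : HasDerivAt (fun x : ℝ => (1-2*x)*t - 1) (-2*t) x := by
          have := (((hasDerivAt_id x).const_mul (2:ℝ)).const_sub (1:ℝ)).mul_const t
          |>.sub_const (1:ℝ)
          simpa using this
        have h2 := ((h1.pow 3).div_const (6*t)).neg
        simp only [Pi.pow_apply, Pi.neg_def] at h2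
        refine h2.congr_deriv ?_
        field_simp
        ring
    · intro x hx
      rw [uIcc_of_le hc10] at hx
      have hx1 : x ≤ c1 := hx.2
      have hge : 1 ≤ (1 - 2*x)*t := by rw [hc1] at hx1; nlinarith
      have hxa : |2*x-1| = 1-2*x := by
        rw [abs_of_nonpos (by nlinarith)]; ring
      unfold h
      rw [hxa, max_eq_left (by nlinarith)]
  have I2 : ∫ x in c1..c2, h t x = 0 := by
    rw [intervalIntegral.integral_congr (g := fun _ => (0:ℝ)) ?_]
    · simp
    · intro x hx
      rw [uIcc_of_le hc12] at hx
      have h1 : |2*x - 1| * t ≤ 1 := by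
        have := hx.1; have := hx.2
        have habs : |2*x-1| ≤ 2*u := by
          rw [abs_le]; constructor <;> [rw [hc1] at *; rw [hc2] at *] <;> nlinarith
        nlinarith
      unfold h
      rw [max_eq_right (by linarith)]
      norm_num
  have I3 : ∫ x in c2..1, h t x = (t-1)^3/(6*t) := by
    rw [intervalIntegral.integral_congr (g := fun x => ((2*x-1)*t - 1)^2) ?_]
    · rw [intervalIntegral.integral_eq_sub_of_hasDerivAt
        (f := fun x => ((2*x-1)*t-1)^3/(6*t)) (f' := fun x => ((2*x-1)*t - 1)^2)
        (fun x _ => ?_) (Continuous.intervalIntegrable (by continuity) _ _)]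
      · rw [hc2, hu_def]; field_simp; ring
      · have h1 : HasDerivAt (fun x : ℝ => (2*x-1)*t - 1) (2*t) x := by
          have := (((hasDerivAt_id x).const_mul (2:ℝ)).sub_const (1:ℝ)).mul_const t
          |>.sub_const (1:ℝ)
          simpa using this
        have h2 := (h1.pow 3).div_const (6*t)
        simp only [Pi.pow_apply] at h2
        refine h2.congr_deriv ?_
        field_simp
        ring
    · intro x hx
      rw [uIcc_of_le hc21] at hx
      have hx1 : c2 ≤ x := hx.1
      have hge : 1 ≤ (2*x - 1)*t := by rw [hc2] at hx1; nlinarith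
      have hxa : |2*x-1| = 2*x-1 := by
        rw [abs_of_nonneg (by nlinarith)]
      unfold h
      rw [hxa, max_eq_left (by nlinarith)]
  rw [I1, I2, I3]
  field_simp
  ring

lemma gA1 {t : ℝ} (ht : 1 ≤ t) : ∫ x in (0:ℝ)..1, g t x = 0 := by
  have h1 : ∫ x in (0:ℝ)..1, g t (1 - x) = ∫ x in (0:ℝ)..1, g t x := by
    simpa using intervalIntegral.integral_comp_sub_left (a := 0) (b := 1) (g t) 1
  have h2 : ∫ x in (0:ℝ)..1, g t (1 - x) = - ∫ x in (0:ℝ)..1, g t x := by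
    simp only [g_reflect]
    exact intervalIntegral.integral_neg
  linarith [h1, h2.symm.trans h1]

lemma inner_eq {t : ℝ} (ht : 1 ≤ t) {m : ℝ} (hm : m ∈ Icc (0:ℝ) 1) :
    ∫ ω in Ioo (0:ℝ) 1, |g t m - g t ω| =
      (2*m - 1) * g t m - 2 * ∫ x in (0:ℝ)..m, g t x := by
  have hg := g_cont ht
  have hcont : Continuous fun ω => |g t m - g t ω| := (continuous_const.sub hg).abs
  have hii : ∀ a b : ℝ, IntervalIntegrable (fun ω => |g t m - g t ω|) volume a b :=
    fun a b => hcont.intervalIntegrable a b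
  have hgi : ∀ a b : ℝ, IntervalIntegrable (g t) volume a b :=
    fun a b => hg.intervalIntegrable a b
  rw [← integral_Ioc_eq_integral_Ioo, ← intervalIntegral.integral_of_le (by norm_num : (0:ℝ) ≤ 1)]
  rw [← intervalIntegral.integral_add_adjacent_intervals (b := m) (hii 0 m) (hii m 1)]
  have e1 : ∫ ω in (0:ℝ)..m, |g t m - g t ω| = m * g t m - ∫ x in (0:ℝ)..m, g t x := by
    rw [intervalIntegral.integral_congr (g := fun ω => g t m - g t ω) (fun ω hω => ?_)]
    · rw [intervalIntegral.integral_sub intervalIntegrable_const (hgi 0 m),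
        intervalIntegral.integral_const]
      simp
    · rw [uIcc_of_le hm.1] at hω
      exact abs_of_nonneg (sub_nonneg.mpr (g_mono ht hω.2))
  have e2 : ∫ ω in m..1, |g t m - g t ω| =
      (- ∫ x in (0:ℝ)..m, g t x) - (1 - m) * g t m := by
    rw [intervalIntegral.integral_congr (g := fun ω => g t ω - g t m) (fun ω hω => ?_)]
    · rw [intervalIntegral.integral_sub (hgi m 1) intervalIntegrable_const,
        intervalIntegral.integral_const]
      have e3 : ∫ x in m..1, g t x = - ∫ x in (0:ℝ)..m, g t x := by
        have := intervalIntegral.integral_add_adjacent_intervals (hgi 0 m) (hgi m 1)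
        rw [gA1 ht] at this; linarith
      rw [e3]
      simp
    · rw [uIcc_of_le hm.2] at hω
      rw [abs_sub_comm]
      exact abs_of_nonneg (sub_nonneg.mpr (g_mono ht hω.1))
  rw [e1, e2]
  ring
end EP15

/-- Post-collision entropic solution of the repulsive Euler–Poisson system: for `t ≥ 1`, the
kinetic and potential energies balance exactly,
`∫₀¹ V(t,m)² dm = ∫₀¹∫₀¹ |X(t,m) - X(t,ω)| dm dω = (t-1)³/(3t)`. -/
theorem stmt_15 (X V : ℝ → ℝ → ℝ)
    (hX : ∀ t m, X t m =
      if 1 / (2 * t) ≤ |m - 1 / 2| then (m - 1 / 2) * (t - 1 / |2 * m - 1|) ^ 2 else 0)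
    (hV : ∀ t m, V t m = derivWithin (fun s => X s m) (Ici t) t) :
    ∀ t, 1 ≤ t →
      (∫ m in Ioo (0:ℝ) 1, (V t m) ^ 2) = (t - 1) ^ 3 / (3 * t) ∧
      (∫ m in Ioo (0:ℝ) 1, ∫ ω in Ioo (0:ℝ) 1, |X t m - X t ω|) = (t - 1) ^ 3 / (3 * t) := by
  intro t ht
  have ht0 : (0:ℝ) < t := lt_of_lt_of_le one_pos ht
  have hXg : ∀ s m, X s m = EP15.g s m := fun s m => by rw [hX]; rfl
  have hg := EP15.g_cont ht
  constructor
  · -- kinetic energy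
    have hVal : ∀ m, V t m =
        (if 1/(2*t) ≤ |m - 1/2| then (m - 1/2) * (2 * (t - 1/|2*m-1|)) else 0) := by
      intro m
      rw [hV, show (fun s => X s m) = (fun s => EP15.g s m) from funext fun s => hXg s m]
      exact EP15.V_eq ht m
    calc (∫ m in Ioo (0:ℝ) 1, (V t m)^2)
        = ∫ m in Ioo (0:ℝ) 1, EP15.h t m := by
          refine setIntegral_congr_fun measurableSet_Ioo fun m _ => ?_
          rw [hVal m]
          exact EP15.sq_V_eq_h ht m
      _ = ∫ x in (0:ℝ)..1, EP15.h t x := by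
          rw [intervalIntegral.integral_of_le (by norm_num : (0:ℝ) ≤ 1),
            integral_Ioc_eq_integral_Ioo]
      _ = (t-1)^3/(3*t) := EP15.integral_h ht
  · -- potential energy
    set A : ℝ → ℝ := fun x => ∫ y in (0:ℝ)..x, EP15.g t y with hA_def
    have hAder : ∀ x : ℝ, HasDerivAt A (EP15.g t x) x := fun x =>
      intervalIntegral.integral_hasDerivAt_right (hg.intervalIntegrable 0 x)
        (hg.stronglyMeasurableAtFilter _ _) hg.continuousAt
    have hAcont : Continuous A := by
      rw [continuous_iff_continuousAt]; exact fun x => (hAder x).continuousAt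
    have hc1 : Continuous fun m : ℝ => (2*m-1) * EP15.g t m :=
      ((continuous_const.mul continuous_id).sub continuous_const).mul hg
    have hint1 : IntervalIntegrable (fun m => (2*m-1) * EP15.g t m) volume 0 1 :=
      hc1.intervalIntegrable _ _
    have hint2 : IntervalIntegrable A volume 0 1 := hAcont.intervalIntegrable _ _
    have hparts : ∫ m in (0:ℝ)..1, A m = - ∫ m in (0:ℝ)..1, EP15.g t m * m := by
      have hp := intervalIntegral.integral_mul_deriv_eq_deriv_mul
        (u := A) (u' := EP15.g t) (v := fun x => x) (v' := fun _ => (1:ℝ))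
        (fun x _ => hAder x) (fun x _ => hasDerivAt_id x)
        (hg.intervalIntegrable 0 1) (intervalIntegrable_const)
      have hA1 : A 1 = 0 := EP15.gA1 ht
      have hA0 : A 0 = 0 := intervalIntegral.integral_same
      simp only [mul_one, hA1, hA0, zero_mul, mul_zero, zero_sub, sub_zero] at hp
      linarith [hp]
    have hK1 : ∫ m in (0:ℝ)..1, 2 * ((2*m-1) * EP15.g t m) = (t-1)^3/(3*t) := by
      rw [intervalIntegral.integral_congr (g := EP15.h t)
        (fun x _ => EP15.two_g_eq_h ht x)]
      exact EP15.integral_h ht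
    rw [intervalIntegral.integral_const_mul] at hK1
    have hK2 : ∫ m in (0:ℝ)..1, (2*m-1) * EP15.g t m =
        2 * ∫ m in (0:ℝ)..1, EP15.g t m * m := by
      have e : ∀ m : ℝ, (2*m-1) * EP15.g t m = 2 * (EP15.g t m * m) - EP15.g t m :=
        fun m => by ring
      rw [intervalIntegral.integral_congr (g := fun m => 2 * (EP15.g t m * m) - EP15.g t m)
        (fun x _ => e x)]
      rw [intervalIntegral.integral_sub
        (Continuous.intervalIntegrable (show Continuous fun x : ℝ => 2 * (EP15.g t x * x) from continuous_const.mul (hg.mul continuous_id)) _ _)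
        (hg.intervalIntegrable _ _),
        intervalIntegral.integral_const_mul, EP15.gA1 ht, sub_zero]
    calc (∫ m in Ioo (0:ℝ) 1, ∫ ω in Ioo (0:ℝ) 1, |X t m - X t ω|)
        = ∫ m in Ioo (0:ℝ) 1, ((2*m-1) * EP15.g t m - 2 * A m) := by
          refine setIntegral_congr_fun measurableSet_Ioo fun m hm => ?_
          simp only [hXg]
          exact EP15.inner_eq ht (Ioo_subset_Icc_self hm)
      _ = ∫ m in (0:ℝ)..1, ((2*m-1) * EP15.g t m - 2 * A m) := by
          rw [intervalIntegral.integral_of_le (by norm_num : (0:ℝ) ≤ 1),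
            integral_Ioc_eq_integral_Ioo]
      _ = (∫ m in (0:ℝ)..1, (2*m-1) * EP15.g t m) - 2 * ∫ m in (0:ℝ)..1, A m := by
          rw [intervalIntegral.integral_sub hint1
            ((hAcont.intervalIntegrable _ _).const_mul 2),
            intervalIntegral.integral_const_mul]
      _ = (t-1)^3/(3*t) := by
          rw [hparts, hK2]
          linarith [hK1]
end

section
/- Let X ∈ L²(0,1) be nondecreasing. Then for a.e. m ∈ (0,1): ∫₀¹ sgn(X(m) − X(ω)) dω = 2m − 1 if m is not in the locally-constant set Ω_X, and ∫₀¹ sgn(X(m) − X(ω)) dω = m_l + m_r − 1 if m belongs to a maximal interval (m_l, m_r) ⊆ Ω_X where X is constant. In particular, the function m ↦ ∫₀¹ sgn(X(m) − X(ω)) dω equals Proj_{H_X}(2m − 1) a.e. -/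
open MeasureTheory Set

/-- Master integral computation. -/
lemma master_integral (X : ℝ → ℝ) (hXmeas : Measurable X) (m a b : ℝ)
    (ha0 : 0 ≤ a) (hb1 : b ≤ 1)
    (hL1 : Ioo 0 a ⊆ Ioo 0 1 ∩ {ω | X ω < X m})
    (hL2 : Ioo 0 1 ∩ {ω | X ω < X m} ⊆ Ioc 0 a)
    (hU1 : Ioo b 1 ⊆ Ioo 0 1 ∩ {ω | X m < X ω})
    (hU2 : Ioo 0 1 ∩ {ω | X m < X ω} ⊆ Ico b 1) :
    (∫ ω in Ioo (0:ℝ) 1, Real.sign (X m - X ω)) = a + b - 1 := by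
  set L : Set ℝ := Ioo 0 1 ∩ {ω | X ω < X m} with hLdef
  set U : Set ℝ := Ioo 0 1 ∩ {ω | X m < X ω} with hUdef
  have hLmeas : MeasurableSet L := measurableSet_Ioo.inter (hXmeas measurableSet_Iio)
  have hUmeas : MeasurableSet U := measurableSet_Ioo.inter (hXmeas measurableSet_Ioi)
  have hLvol : volume L = ENNReal.ofReal a := by
    refine le_antisymm ?_ ?_
    · calc volume L ≤ volume (Ioc 0 a) := measure_mono hL2
        _ = ENNReal.ofReal a := by rw [Real.volume_Ioc, sub_zero]
    · calc ENNReal.ofReal a = volume (Ioo 0 a) := by rw [Real.volume_Ioo, sub_zero]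
        _ ≤ volume L := measure_mono hL1
  have hUvol : volume U = ENNReal.ofReal (1 - b) := by
    refine le_antisymm ?_ ?_
    · calc volume U ≤ volume (Ico b 1) := measure_mono hU2
        _ = ENNReal.ofReal (1 - b) := Real.volume_Ico
    · calc ENNReal.ofReal (1 - b) = volume (Ioo b 1) := (Real.volume_Ioo).symm
        _ ≤ volume U := measure_mono hU1
  have heq : EqOn (fun ω => Real.sign (X m - X ω))
      (fun ω => L.indicator (fun _ => (1:ℝ)) ω - U.indicator (fun _ => (1:ℝ)) ω) (Ioo 0 1) := by
    intro ω hω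
    rcases lt_trichotomy (X ω) (X m) with h | h | h
    · have hωL : ω ∈ L := ⟨hω, h⟩
      have hωU : ω ∉ U := fun hc => absurd hc.2 (not_lt.2 h.le)
      simp only [indicator_of_mem hωL, indicator_of_notMem hωU,
        Real.sign_of_pos (by linarith : (0:ℝ) < X m - X ω)]
      ring
    · have hωL : ω ∉ L := fun hc => absurd hc.2 (by simp only [mem_setOf_eq, h]; exact lt_irrefl _)
      have hωU : ω ∉ U := fun hc => absurd hc.2 (by simp only [mem_setOf_eq, h]; exact lt_irrefl _)
      simp only [indicator_of_notMem hωL, indicator_of_notMem hωU]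
      rw [h, sub_self, Real.sign_zero, sub_zero]
    · have hωU : ω ∈ U := ⟨hω, h⟩
      have hωL : ω ∉ L := fun hc => absurd hc.2 (not_lt.2 h.le)
      simp only [indicator_of_mem hωU, indicator_of_notMem hωL,
        Real.sign_of_neg (by linarith : X m - X ω < 0)]
      ring
  rw [setIntegral_congr_fun measurableSet_Ioo heq]
  have hfin : ∀ s : Set ℝ, (volume.restrict (Ioo (0:ℝ) 1)) s < ⊤ := by
    intro s
    calc (volume.restrict (Ioo (0:ℝ) 1)) s ≤ (volume.restrict (Ioo (0:ℝ) 1)) univ :=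
          measure_mono (subset_univ s)
      _ = volume (Ioo (0:ℝ) 1) := by rw [Measure.restrict_apply_univ]
      _ < ⊤ := by rw [Real.volume_Ioo]; exact ENNReal.ofReal_lt_top
  have hintL : Integrable (L.indicator (fun _ => (1:ℝ))) (volume.restrict (Ioo (0:ℝ) 1)) := by
    rw [integrable_indicator_iff hLmeas]
    exact integrableOn_const (hfin L).ne (by simp)
  have hintU : Integrable (U.indicator (fun _ => (1:ℝ))) (volume.restrict (Ioo (0:ℝ) 1)) := by
    rw [integrable_indicator_iff hUmeas]
    exact integrableOn_const (hfin U).ne (by simp)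
  rw [integral_sub hintL hintU]
  have h1 : (∫ ω in Ioo (0:ℝ) 1, L.indicator (fun _ => (1:ℝ)) ω) = a := by
    rw [show (L.indicator (fun _ => (1:ℝ))) = (L.indicator (1 : ℝ → ℝ)) from rfl,
      integral_indicator_one hLmeas, measureReal_def, Measure.restrict_apply hLmeas,
      inter_eq_self_of_subset_left (fun x hx => hx.1), hLvol, ENNReal.toReal_ofReal ha0]
  have h2 : (∫ ω in Ioo (0:ℝ) 1, U.indicator (fun _ => (1:ℝ)) ω) = 1 - b := by
    rw [show (U.indicator (fun _ => (1:ℝ))) = (U.indicator (1 : ℝ → ℝ)) from rfl,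
      integral_indicator_one hUmeas, measureReal_def, Measure.restrict_apply hUmeas,
      inter_eq_self_of_subset_left (fun x hx => hx.1), hUvol,
      ENNReal.toReal_ofReal (by linarith)]
  rw [h1, h2]; ring

lemma const_on_le (X : ℝ → ℝ) {a b : ℝ}
    (hsub : Ioo a b ⊆ locallyConstantSet X) {x y : ℝ}
    (hx : x ∈ Ioo a b) (hy : y ∈ Ioo a b) (hxy : x ≤ y) : X x = X y := by
  set S := {t ∈ Icc x y | ∀ u ∈ Icc x t, X u = X x} with hSdef
  have hxS : x ∈ S := by
    refine ⟨⟨le_refl x, hxy⟩, fun u hu => ?_⟩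
    have : u = x := le_antisymm hu.2 hu.1
    rw [this]
  have hbdd : BddAbove S := ⟨y, fun t ht => ht.1.2⟩
  set t0 := sSup S with ht0def
  have ht0 : t0 ∈ Icc x y := ⟨le_csSup hbdd hxS, csSup_le ⟨x, hxS⟩ (fun t ht => ht.1.2)⟩
  have ht0ab : t0 ∈ Ioo a b := ⟨lt_of_lt_of_le hx.1 ht0.1, lt_of_le_of_lt ht0.2 hy.2⟩
  obtain ⟨_, ε, hε, hconst⟩ := hsub ht0ab
  obtain ⟨t, htS, htlt⟩ := exists_lt_of_lt_csSup ⟨x, hxS⟩ (by linarith : t0 - ε < t0)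
  have htle : t ≤ t0 := le_csSup hbdd htS
  set t1 := min (t0 + ε / 2) y with ht1def
  have ht1S : t1 ∈ S := by
    refine ⟨⟨le_min (by linarith [ht0.1]) hxy, min_le_right _ _⟩, fun u hu => ?_⟩
    by_cases hut : u ≤ t
    · exact htS.2 u ⟨hu.1, hut⟩
    · push_neg at hut
      have hu1 : u ≤ t0 + ε / 2 := le_trans hu.2 (min_le_left _ _)
      have hub : u ∈ Metric.ball t0 ε := by
        rw [Metric.mem_ball, Real.dist_eq, abs_lt]; constructor <;> linarith
      have htb : t ∈ Metric.ball t0 ε := by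
        rw [Metric.mem_ball, Real.dist_eq, abs_lt]; constructor <;> linarith
      rw [hconst u hub t htb]
      exact htS.2 t ⟨htS.1.1, le_refl t⟩
  have ht1le : t1 ≤ t0 := le_csSup hbdd ht1S
  have hy0 : y ≤ t0 + ε / 2 := by
    by_contra hcon
    push_neg at hcon
    have : t1 = t0 + ε / 2 := min_eq_left (by linarith)
    rw [this] at ht1le; linarith
  have hyS : y ∈ S := by
    have : t1 = y := min_eq_right hy0
    rwa [this] at ht1S
  exact (hyS.2 y ⟨hxy, le_refl y⟩).symm

lemma const_on (X : ℝ → ℝ) {a b : ℝ}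
    (hsub : Ioo a b ⊆ locallyConstantSet X) {x y : ℝ}
    (hx : x ∈ Ioo a b) (hy : y ∈ Ioo a b) : X x = X y := by
  rcases le_total x y with h | h
  · exact const_on_le X hsub hx hy h
  · exact (const_on_le X hsub hy hx h).symm

lemma omega_open (X : ℝ → ℝ) : IsOpen (locallyConstantSet X) := by
  rw [Metric.isOpen_iff]
  rintro m ⟨hm01, ε, hε, hc⟩
  obtain ⟨hm0, hm1⟩ := hm01
  refine ⟨min (ε / 2) (min m (1 - m)),
    lt_min (by linarith) (lt_min hm0 (by linarith)), ?_⟩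
  intro m' hm'
  rw [Metric.mem_ball, Real.dist_eq] at hm'
  have hA : |m' - m| < ε / 2 := lt_of_lt_of_le hm' (min_le_left _ _)
  have hB : |m' - m| < m := lt_of_lt_of_le hm' (le_trans (min_le_right _ _) (min_le_left _ _))
  have hC : |m' - m| < 1 - m := lt_of_lt_of_le hm' (le_trans (min_le_right _ _) (min_le_right _ _))
  rw [abs_lt] at hB hC
  have habs := abs_nonneg (m' - m)
  refine ⟨⟨by linarith [hB.1], by linarith [hC.2]⟩, ε / 2, by linarith, fun y hy z hz => ?_⟩
  rw [Metric.mem_ball, Real.dist_eq] at hy hz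
  have hy' : y ∈ Metric.ball m ε := by
    rw [Metric.mem_ball, Real.dist_eq]
    calc |y - m| = |(y - m') + (m' - m)| := by ring_nf
      _ ≤ |y - m'| + |m' - m| := abs_add_le _ _
      _ < ε := by linarith
  have hz' : z ∈ Metric.ball m ε := by
    rw [Metric.mem_ball, Real.dist_eq]
    calc |z - m| = |(z - m') + (m' - m)| := by ring_nf
      _ ≤ |z - m'| + |m' - m| := abs_add_le _ _
      _ < ε := by linarith
  exact hc y hy' z hz'

lemma exists_max_interval (X : ℝ → ℝ) {m : ℝ} (hm : m ∈ locallyConstantSet X) :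
    ∃ a b, IsMaxInterval X a b ∧ m ∈ Ioo a b := by
  have hΩsub : locallyConstantSet X ⊆ Ioo 0 1 := fun _ h => h.1
  obtain ⟨hm0, hm1⟩ := hΩsub hm
  obtain ⟨ε, hε, hball⟩ := Metric.isOpen_iff.1 (omega_open X) m hm
  set A := {x : ℝ | Icc x m ⊆ locallyConstantSet X} with hAdef
  set B := {x : ℝ | Icc m x ⊆ locallyConstantSet X} with hBdef
  have hballmem : ∀ u : ℝ, |u - m| < ε → u ∈ locallyConstantSet X := by
    intro u hu
    exact hball (by rwa [Metric.mem_ball, Real.dist_eq])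
  have hA1 : m - ε / 2 ∈ A := by
    intro u hu
    exact hballmem u (by rw [abs_lt]; constructor <;> [linarith [hu.1]; linarith [hu.2]])
  have hB1 : m + ε / 2 ∈ B := by
    intro u hu
    exact hballmem u (by rw [abs_lt]; constructor <;> [linarith [hu.1]; linarith [hu.2]])
  have hAbdd : BddBelow A := by
    refine ⟨0, fun x hx => ?_⟩
    rcases le_or_gt x m with h | h
    · exact le_of_lt ((hΩsub (hx ⟨le_refl x, h⟩)).1)
    · linarith
  have hBbdd : BddAbove B := by
    refine ⟨1, fun x hx => ?_⟩
    rcases le_or_gt m x with h | h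
    · exact le_of_lt ((hΩsub (hx ⟨h, le_refl x⟩)).2)
    · linarith
  set a := sInf A with hadef
  set b := sSup B with hbdef
  have ham : a < m := lt_of_le_of_lt (csInf_le hAbdd hA1) (by linarith)
  have hmb : m < b := lt_of_lt_of_le (by linarith) (le_csSup hBbdd hB1)
  have hIoo : Ioo a b ⊆ locallyConstantSet X := by
    intro y hy
    rcases le_or_gt y m with h | h
    · obtain ⟨x, hxA, hxy⟩ := exists_lt_of_csInf_lt ⟨m - ε / 2, hA1⟩ hy.1
      exact hxA ⟨le_of_lt hxy, h⟩
    · obtain ⟨x, hxB, hxy⟩ := exists_lt_of_lt_csSup ⟨m + ε / 2, hB1⟩ hy.2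
      exact hxB ⟨le_of_lt h, le_of_lt hxy⟩
  have hanot : a ∉ locallyConstantSet X := by
    intro h
    obtain ⟨δ, hδ, hballa⟩ := Metric.isOpen_iff.1 (omega_open X) a h
    have : a - δ / 2 ∈ A := by
      intro u hu
      rcases le_or_gt u a with h2 | h2
      · refine hballa ?_
        rw [Metric.mem_ball, Real.dist_eq, abs_lt]
        have := hu.1
        constructor <;> linarith
      · exact hIoo ⟨h2, lt_of_le_of_lt hu.2 hmb⟩
    have := csInf_le hAbdd this
    linarith
  have hbnot : b ∉ locallyConstantSet X := by
    intro h
    obtain ⟨δ, hδ, hballb⟩ := Metric.isOpen_iff.1 (omega_open X) b h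
    have : b + δ / 2 ∈ B := by
      intro u hu
      rcases le_or_gt b u with h2 | h2
      · refine hballb ?_
        rw [Metric.mem_ball, Real.dist_eq, abs_lt]
        have := hu.2
        constructor <;> linarith
      · exact hIoo ⟨lt_of_lt_of_le ham hu.1, h2⟩
    have := le_csSup hBbdd this
    linarith
  exact ⟨a, b, ⟨lt_trans ham hmb, hIoo, hanot, hbnot⟩, ham, hmb⟩

/-- If `X` is monotone on `(0,1)` and takes equal values at `x < y` in `(0,1)`, then every
point strictly between is in the locally constant set. -/
lemma mem_omega_of_sandwich {X : ℝ → ℝ} (hX : MonotoneOn X (Ioo (0:ℝ) 1)) {x y z : ℝ}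
    (hx : x ∈ Ioo (0:ℝ) 1) (hy : y ∈ Ioo (0:ℝ) 1) (hXxy : X x = X y) (hz : z ∈ Ioo x y) :
    z ∈ locallyConstantSet X := by
  have hkey : ∀ u ∈ Icc x y, X u = X x := by
    intro u hu
    have hu01 : u ∈ Ioo (0:ℝ) 1 := ⟨lt_of_lt_of_le hx.1 hu.1, lt_of_le_of_lt hu.2 hy.2⟩
    refine le_antisymm ?_ (hX hx hu01 hu.1)
    rw [hXxy]
    exact hX hu01 hy hu.2
  have hz01 : z ∈ Ioo (0:ℝ) 1 := ⟨lt_trans hx.1 hz.1, lt_trans hz.2 hy.2⟩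
  refine ⟨hz01, min (z - x) (y - z), lt_min (by linarith [hz.1]) (by linarith [hz.2]),
    fun p hp r hr => ?_⟩
  have hmem : ∀ w ∈ Metric.ball z (min (z - x) (y - z)), w ∈ Icc x y := by
    intro w hw
    rw [Metric.mem_ball, Real.dist_eq] at hw
    have h1 : |w - z| < z - x := lt_of_lt_of_le hw (min_le_left _ _)
    have h2 : |w - z| < y - z := lt_of_lt_of_le hw (min_le_right _ _)
    rw [abs_lt] at h1 h2
    exact ⟨by linarith [h1.1], by linarith [h2.2]⟩
  rw [hkey p (hmem p hp), hkey r (hmem r hr)]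

def badSet (X : ℝ → ℝ) : Set ℝ :=
  {m | m ∈ Ioo (0:ℝ) 1 ∧ m ∉ locallyConstantSet X ∧
    ∃ q : ℚ, (q:ℝ) ∈ Ioo (0:ℝ) 1 ∧ (q:ℝ) ≠ m ∧ X q = X m}

lemma badSet_countable {X : ℝ → ℝ} (hX : MonotoneOn X (Ioo (0:ℝ) 1)) :
    (badSet X).Countable := by
  have hsub : badSet X ⊆ ⋃ (q : ℚ) (s : Bool),
      {m | m ∈ Ioo (0:ℝ) 1 ∧ m ∉ locallyConstantSet X ∧ (q:ℝ) ∈ Ioo (0:ℝ) 1 ∧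
        X q = X m ∧ (if s then (q:ℝ) < m else m < (q:ℝ))} := by
    rintro m ⟨hm01, hmΩ, q, hq01, hqne, hqX⟩
    rcases lt_or_gt_of_ne hqne with h | h
    · exact mem_iUnion.2 ⟨q, mem_iUnion.2 ⟨true, hm01, hmΩ, hq01, hqX, by simpa using h⟩⟩
    · exact mem_iUnion.2 ⟨q, mem_iUnion.2 ⟨false, hm01, hmΩ, hq01, hqX, by simpa using h⟩⟩
  refine Set.Countable.mono hsub (Set.countable_iUnion fun q => Set.countable_iUnion fun s =>
    Set.Subsingleton.countable ?_)
  rintro m ⟨hm01, hmΩ, hq01, hqm, hside⟩ m' ⟨hm01', hmΩ', hq01', hqm', hside'⟩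
  by_contra hne
  cases s with
  | true =>
    rw [if_pos rfl] at hside hside'
    rcases lt_or_gt_of_ne hne with h | h
    · exact hmΩ (mem_omega_of_sandwich hX hq01 hm01' (hqm') ⟨hside, h⟩)
    · exact hmΩ' (mem_omega_of_sandwich hX hq01 hm01 (hqm) ⟨hside', h⟩)
  | false =>
    rw [if_neg (by simp)] at hside hside'
    rcases lt_or_gt_of_ne hne with h | h
    · exact hmΩ' (mem_omega_of_sandwich hX hm01 hq01 (hqm.symm) ⟨h, hside'⟩)
    · exact hmΩ (mem_omega_of_sandwich hX hm01' hq01 (hqm'.symm) ⟨h, hside⟩)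

lemma clause1 {X : ℝ → ℝ} (hX : MonotoneOn X (Ioo (0:ℝ) 1)) (hXmeas : Measurable X)
    {m : ℝ} (hm : m ∈ Ioo (0:ℝ) 1) (hnb : m ∉ badSet X) (hnΩ : m ∉ locallyConstantSet X) :
    (∫ ω in Ioo (0:ℝ) 1, Real.sign (X m - X ω)) = 2 * m - 1 := by
  have key : (∫ ω in Ioo (0:ℝ) 1, Real.sign (X m - X ω)) = m + m - 1 := by
    refine master_integral X hXmeas m m m hm.1.le hm.2.le ?_ ?_ ?_ ?_
    · intro ω hω
      have hω01 : ω ∈ Ioo (0:ℝ) 1 := ⟨hω.1, lt_trans hω.2 hm.2⟩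
      refine ⟨hω01, lt_of_le_of_ne (hX hω01 hm hω.2.le) fun heq => hnb ⟨hm, hnΩ, ?_⟩⟩
      obtain ⟨q, hq1, hq2⟩ := exists_rat_btwn hω.2
      have hq01 : (q:ℝ) ∈ Ioo (0:ℝ) 1 := ⟨lt_trans hω.1 hq1, lt_trans hq2 hm.2⟩
      refine ⟨q, hq01, ne_of_lt hq2, le_antisymm (hX hq01 hm hq2.le) ?_⟩
      rw [← heq]
      exact hX hω01 hq01 hq1.le
    · rintro ω ⟨hω01, hlt⟩
      refine ⟨hω01.1, ?_⟩
      by_contra hc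
      push_neg at hc
      exact absurd (hX hm hω01 hc.le) (not_le.2 hlt)
    · intro ω hω
      have hω01 : ω ∈ Ioo (0:ℝ) 1 := ⟨lt_trans hm.1 hω.1, hω.2⟩
      refine ⟨hω01, lt_of_le_of_ne (hX hm hω01 hω.1.le) fun heq => hnb ⟨hm, hnΩ, ?_⟩⟩
      obtain ⟨q, hq1, hq2⟩ := exists_rat_btwn hω.1
      have hq01 : (q:ℝ) ∈ Ioo (0:ℝ) 1 := ⟨lt_trans hm.1 hq1, lt_trans hq2 hω01.2⟩
      refine ⟨q, hq01, (ne_of_lt hq1).symm, le_antisymm ?_ (hX hm hq01 hq1.le)⟩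
      rw [heq]
      exact hX hq01 hω01 hq2.le
    · rintro ω ⟨hω01, hlt⟩
      refine ⟨?_, hω01.2⟩
      by_contra hc
      push_neg at hc
      exact absurd (hX hω01 hm hc.le) (not_le.2 hlt)
  rw [key]; ring

lemma clause2 {X : ℝ → ℝ} (hX : MonotoneOn X (Ioo (0:ℝ) 1)) (hXmeas : Measurable X)
    {m a b : ℝ} (hmax : IsMaxInterval X a b) (hm : m ∈ Ioo a b) :
    (∫ ω in Ioo (0:ℝ) 1, Real.sign (X m - X ω)) = a + b - 1 := by
  obtain ⟨hab, hsub, hanot, hbnot⟩ := hmax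
  have hab01 : Ioo a b ⊆ Ioo (0:ℝ) 1 := fun x hx => (hsub hx).1
  have hm01 : m ∈ Ioo (0:ℝ) 1 := hab01 hm
  have ha0 : 0 ≤ a := by
    by_contra h
    push_neg at h
    have : a / 2 ∈ Ioo a b := ⟨by linarith, by linarith [hm.2, hm01.1]⟩
    linarith [(hab01 this).1]
  have hb1 : b ≤ 1 := by
    by_contra h
    push_neg at h
    have : (1 + b) / 2 ∈ Ioo a b := ⟨by linarith [hm.1, hm01.2], by linarith⟩
    linarith [(hab01 this).2]
  have ha1 : a < 1 := lt_of_lt_of_le hab hb1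
  have hb0 : 0 < b := lt_of_le_of_lt ha0 hab
  have hconst : ∀ x ∈ Ioo a b, X x = X m := fun x hx => const_on X hsub hx hm
  have hy : (a + b) / 2 ∈ Ioo a b := ⟨by linarith, by linarith⟩
  refine master_integral X hXmeas m a b ha0 hb1 ?_ ?_ ?_ ?_
  · intro ω hω
    have hω01 : ω ∈ Ioo (0:ℝ) 1 := ⟨hω.1, lt_trans hω.2 ha1⟩
    have hle : X ω ≤ X m := hX hω01 hm01 (le_of_lt (lt_trans hω.2 hm.1))
    refine ⟨hω01, lt_of_le_of_ne hle fun heq => hanot ?_⟩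
    have hXωy : X ω = X ((a + b) / 2) := heq.trans (hconst _ hy).symm
    exact mem_omega_of_sandwich hX hω01 (hab01 hy) hXωy ⟨hω.2, hy.1⟩
  · rintro ω ⟨hω01, hlt⟩
    refine ⟨hω01.1, ?_⟩
    by_contra hc
    push_neg at hc
    rcases lt_or_ge ω b with h2 | h2
    · have := hconst ω ⟨hc, h2⟩
      simp only [mem_setOf_eq, this] at hlt
      exact lt_irrefl _ hlt
    · exact absurd (hX hm01 hω01 (le_of_lt (lt_of_lt_of_le hm.2 h2))) (not_le.2 hlt)
  · intro ω hω
    have hω01 : ω ∈ Ioo (0:ℝ) 1 := ⟨lt_trans hb0 hω.1, hω.2⟩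
    have hle : X m ≤ X ω := hX hm01 hω01 (le_of_lt (lt_trans hm.2 hω.1))
    refine ⟨hω01, lt_of_le_of_ne hle fun heq => hbnot ?_⟩
    have hXyω : X ((a + b) / 2) = X ω := (hconst _ hy).trans heq
    exact mem_omega_of_sandwich hX (hab01 hy) hω01 hXyω ⟨hy.2, hω.1⟩
  · rintro ω ⟨hω01, hlt⟩
    refine ⟨?_, hω01.2⟩
    by_contra hc
    push_neg at hc
    rcases lt_or_ge a ω with h2 | h2
    · have := hconst ω ⟨h2, hc⟩
      simp only [mem_setOf_eq, this] at hlt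
      exact lt_irrefl _ hlt
    · exact absurd (hX hω01 hm01 (le_of_lt (lt_of_le_of_lt h2 hm.1))) (not_le.2 hlt)

/-- For `X ∈ L²(0,1)` nondecreasing, a.e. `m`: `∫₀¹ sgn(X(m) - X(ω)) dω = 2m - 1` off the
locally-constant set `Ω_X`, and `= a + b - 1` on each maximal interval `(a,b) ⊆ Ω_X`; in
particular this function coincides a.e. with `Proj_{H_X}(2m - 1)` (here represented by `P`). -/
theorem stmt_17 (X P : ℝ → ℝ)
    (hX : MonotoneOn X (Ioo (0:ℝ) 1))
    (hXmeas : Measurable X)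
    (hXm : MemLp X 2 (volume.restrict (Ioo (0:ℝ) 1)))
    (hP1 : ∀ m ∈ Ioo (0:ℝ) 1 \ locallyConstantSet X, P m = 2 * m - 1)
    (hP2 : ∀ a b, IsMaxInterval X a b → ∀ m ∈ Ioo a b, P m = a + b - 1) :
    ∀ᵐ m ∂(volume.restrict (Ioo (0:ℝ) 1)),
      (m ∉ locallyConstantSet X →
        (∫ ω in Ioo (0:ℝ) 1, Real.sign (X m - X ω)) = 2 * m - 1) ∧
      (∀ a b, IsMaxInterval X a b → m ∈ Ioo a b →
        (∫ ω in Ioo (0:ℝ) 1, Real.sign (X m - X ω)) = a + b - 1) ∧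
      (∫ ω in Ioo (0:ℝ) 1, Real.sign (X m - X ω)) = P m := by
  have h0 : ∀ᵐ m ∂(volume.restrict (Ioo (0:ℝ) 1)), m ∉ badSet X :=
    ae_restrict_of_ae ((badSet_countable hX).ae_notMem volume)
  have h1 : ∀ᵐ m ∂(volume.restrict (Ioo (0:ℝ) 1)), m ∈ Ioo (0:ℝ) 1 :=
    ae_restrict_mem measurableSet_Ioo
  filter_upwards [h0, h1] with m hmb hm01
  refine ⟨fun hnΩ => clause1 hX hXmeas hm01 hmb hnΩ,
    fun a b hmax hmab => clause2 hX hXmeas hmax hmab, ?_⟩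
  by_cases hΩ : m ∈ locallyConstantSet X
  · obtain ⟨a, b, hmax, hmab⟩ := exists_max_interval X hΩ
    rw [clause2 hX hXmeas hmax hmab, hP2 a b hmax m hmab]
  · rw [clause1 hX hXmeas hm01 hmb hΩ, hP1 m ⟨hm01, hΩ⟩]
end
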